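/- arXiv:1904.08730 — 13 statements merged into one kernel-verified Lean document; each statement's English description precedes it below -/
import Mathlib

section
/- For each fixed u with 0 < u < 1, the function η(α) = u^α · log(u) / (1 - u^α) is increasing in α on (0, ∞). -/
theorem eta_increasing_in_alpha (u : ℝ) (hu0 : 0 < u) (hu1 : u < 1) :
    MonotoneOn (fun α : ℝ => u ^ α * Real.log u / (1 - u ^ α)) (Set.Ioi (0 : ℝ)) := by
  intro a ha b hb hab
  simp only [Set.mem_Ioi] at ha hb
  simp only
  have hlu : Real.log u < 0 := Real.log_neg hu0 hu1
  have hx1 : u ^ a < 1 := Real.rpow_lt_one hu0.le hu1 ha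
  have hy1 : u ^ b < 1 := Real.rpow_lt_one hu0.le hu1 hb
  have hx0 : 0 < u ^ a := Real.rpow_pos_of_pos hu0 a
  have hy0 : 0 < u ^ b := Real.rpow_pos_of_pos hu0 b
  have hyx : u ^ b ≤ u ^ a := Real.rpow_le_rpow_of_exponent_ge hu0 hu1.le hab
  rw [div_le_div_iff₀ (by linarith) (by linarith)]
  nlinarith [mul_nonneg (sub_nonneg.2 hyx) (neg_nonneg.2 hlu.le)]
end

section
/- For each fixed α > 0, the function u ↦ u^α · log(u) / (1 - u^α) is decreasing in u on (0, 1). -/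
theorem eta_decreasing_in_u (α : ℝ) (hα : 0 < α) :
    AntitoneOn (fun u : ℝ => u ^ α * Real.log u / (1 - u ^ α)) (Set.Ioo (0 : ℝ) 1) := by
  have hderiv : ∀ u ∈ Set.Ioo (0:ℝ) 1,
      HasDerivAt (fun u : ℝ => u ^ α * Real.log u / (1 - u ^ α))
        (u ^ (α - 1) * (α * Real.log u + 1 - u ^ α) / (1 - u ^ α) ^ 2) u := by
    rintro u ⟨hu0, hu1⟩
    have hune : u ≠ 0 := ne_of_gt hu0
    have hlt : u ^ α < 1 := Real.rpow_lt_one hu0.le hu1 hα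
    have hD : (1 : ℝ) - u ^ α ≠ 0 := by intro h; nlinarith
    have h1 : HasDerivAt (fun u : ℝ => u ^ α) (α * u ^ (α - 1)) u :=
      Real.hasDerivAt_rpow_const (Or.inl hune)
    have h2 : HasDerivAt Real.log (1 / u) u := by
      simpa [one_div] using Real.hasDerivAt_log hune
    have hN : HasDerivAt (fun u : ℝ => u ^ α * Real.log u)
        (α * u ^ (α - 1) * Real.log u + u ^ α * (1 / u)) u := h1.mul h2
    have hDd : HasDerivAt (fun u : ℝ => 1 - u ^ α) (0 - α * u ^ (α - 1)) u :=
      (hasDerivAt_const u 1).sub h1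
    have := hN.div hDd hD
    convert this using 1
    case e'_4 => rfl
    case e'_5 => rfl
    case e'_8 => rfl
    have ht : u ^ α * (1 / u) = u ^ (α - 1) := by
      rw [Real.rpow_sub hu0, Real.rpow_one, mul_one_div]
    rw [← ht]
    field_simp
    ring
  have hanti : StrictAntiOn (fun u : ℝ => u ^ α * Real.log u / (1 - u ^ α))
      (Set.Ioo (0:ℝ) 1) := by
    apply strictAntiOn_of_deriv_neg (convex_Ioo 0 1)
    · intro x hx
      exact (hderiv x hx).continuousAt.continuousWithinAt
    · intro x hx
      rw [interior_Ioo] at hx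
      obtain ⟨hx0, hx1⟩ := hx
      rw [(hderiv x ⟨hx0, hx1⟩).deriv]
      have hlt : x ^ α < 1 := Real.rpow_lt_one hx0.le hx1 hα
      have hpos : (0:ℝ) < x ^ (α - 1) := Real.rpow_pos_of_pos hx0 _
      have hpos2 : (0:ℝ) < (1 - x ^ α) ^ 2 := pow_pos (by linarith) 2
      have hlog : Real.log (x ^ α) < x ^ α - 1 :=
        Real.log_lt_sub_one_of_pos (Real.rpow_pos_of_pos hx0 α) (ne_of_lt hlt)
      rw [Real.log_rpow hx0] at hlog
      apply div_neg_of_neg_of_pos _ hpos2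
      have : α * Real.log x + 1 - x ^ α < 0 := by linarith
      exact mul_neg_of_pos_of_neg hpos this
  exact hanti.antitoneOn
end

section
/- For each fixed u with 0 < u < 1, the function γ(α) = α(1 - u)u^(α-1) / (1 - u^α) is decreasing in α on (0, ∞). -/
lemma aux_secant (x y : ℝ) (hx : 0 < x) (hxy : x ≤ y) :
    y / (Real.exp y - 1) ≤ x / (Real.exp x - 1) := by
  have hy : 0 < y := lt_of_lt_of_le hx hxy
  have hex : 0 < Real.exp x - 1 := by
    have := Real.one_lt_exp_iff.2 hx; linarith
  have hey : 0 < Real.exp y - 1 := by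
    have := Real.one_lt_exp_iff.2 hy; linarith
  have hsec := convexOn_exp.secant_mono (a := 0) (x := x) (y := y)
    (Set.mem_univ _) (Set.mem_univ _) (Set.mem_univ _) hx.ne' hy.ne' hxy
  simp only [Real.exp_zero, sub_zero] at hsec
  have hpos : 0 < (Real.exp x - 1) / x := div_pos hex hx
  have h := one_div_le_one_div_of_le hpos hsec
  rwa [one_div_div, one_div_div] at h

theorem gamma_decreasing_in_alpha (u : ℝ) (hu0 : 0 < u) (hu1 : u < 1) :
    AntitoneOn (fun α : ℝ => α * (1 - u) * u ^ (α - 1) / (1 - u ^ α)) (Set.Ioi (0 : ℝ)) := by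
  intro a ha b hb hab
  simp only [Set.mem_Ioi] at ha hb
  set c := Real.log u with hc
  have hcneg : c < 0 := Real.log_neg hu0 hu1
  have hu' : 0 < 1 - u := by linarith
  -- rewrite rpow as exp
  have key : ∀ α : ℝ, 0 < α →
      α * (1 - u) * u ^ (α - 1) / (1 - u ^ α)
        = (1 - u) * Real.exp (-c) * (α / (Real.exp (-(c * α)) - 1)) := by
    intro α hα
    have hE1 : Real.exp (c * α) < 1 :=
      Real.exp_lt_one_iff.2 (mul_neg_of_neg_of_pos hcneg hα)
    have hE0 : (0:ℝ) < Real.exp (c * α) := Real.exp_pos _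
    have h1E : (0:ℝ) < 1 - Real.exp (c * α) := by linarith
    have hinv : Real.exp (-(c * α)) - 1 = (1 - Real.exp (c * α)) / Real.exp (c * α) := by
      rw [Real.exp_neg]
      field_simp
    rw [Real.rpow_def_of_pos hu0 (α - 1), Real.rpow_def_of_pos hu0 α, ← hc, hinv,
      show c * (α - 1) = c * α + (-c) by ring, Real.exp_add]
    field_simp
  dsimp only
  rw [key a ha, key b hb]
  have hcpos : (0:ℝ) < -c := by linarith
  have hx : 0 < -c * a := mul_pos hcpos ha
  have hxy : -c * a ≤ -c * b := by nlinarith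
  have h := aux_secant (-c * a) (-c * b) hx hxy
  have hexa : 0 < Real.exp (-c * a) - 1 := by
    have := Real.one_lt_exp_iff.2 hx; linarith
  have hexb : 0 < Real.exp (-c * b) - 1 := by
    have := Real.one_lt_exp_iff.2 (lt_of_lt_of_le hx hxy); linarith
  have hab' : b / (Real.exp (-c * b) - 1) ≤ a / (Real.exp (-c * a) - 1) := by
    rw [show -c * b / (Real.exp (-c * b) - 1) = -c * (b / (Real.exp (-c * b) - 1)) by
        rw [mul_div_assoc],
      show -c * a / (Real.exp (-c * a) - 1) = -c * (a / (Real.exp (-c * a) - 1)) by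
        rw [mul_div_assoc]] at h
    exact le_of_mul_le_mul_left h hcpos
  have hconst : 0 < (1 - u) * Real.exp (-c) := mul_pos hu' (Real.exp_pos _)
  have hrw : ∀ t : ℝ, -(c * t) = -c * t := fun t => by ring
  rw [hrw a, hrw b]
  exact mul_le_mul_of_nonneg_left hab' hconst.le
end

section
/- For each fixed α with 0 < α ≤ 1, the function u ↦ α(1 - u)u^(α-1) / (1 - u^α) is decreasing in u on (0, 1). -/
theorem gamma_decreasing_in_u (α : ℝ) (hα0 : 0 < α) (hα1 : α ≤ 1) :
    AntitoneOn (fun u : ℝ => α * (1 - u) * u ^ (α - 1) / (1 - u ^ α)) (Set.Ioo (0 : ℝ) 1) := by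
  set β : ℝ := 1 - α with hβ
  have hβ0 : 0 ≤ β := by simp [hβ]; linarith
  have hβ1 : β < 1 := by simp [hβ]; linarith
  -- h is concave on Ici 0
  have hconc : ConcaveOn ℝ (Set.Ici (0:ℝ)) (fun u : ℝ => u ^ β - u) := by
    have h1 : ConcaveOn ℝ (Set.Ici (0:ℝ)) (fun u : ℝ => u ^ β) :=
      Real.concaveOn_rpow hβ0 hβ1.le
    have h2 : ConvexOn ℝ (Set.Ici (0:ℝ)) (fun u : ℝ => u) := convexOn_id (convex_Ici 0)
    exact h1.sub h2
  have hconv : ConvexOn ℝ (Set.Ici (0:ℝ)) (fun u : ℝ => -(u ^ β - u)) := hconc.neg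
  -- define g u = (u^β - u)/(1-u); show key facts
  have hgpos : ∀ u ∈ Set.Ioo (0:ℝ) 1, 0 < (u ^ β - u) / (1 - u) := by
    intro u hu
    have hu0 : (0:ℝ) < u := hu.1
    have hu1 : u < 1 := hu.2
    have : u < u ^ β := by
      have := Real.rpow_lt_rpow_of_exponent_gt hu0 hu1 hβ1
      simpa [Real.rpow_one] using this
    have h1 : 0 < u ^ β - u := by linarith
    have h2 : 0 < 1 - u := by linarith
    positivity
  -- g is monotone via secant slopes at the point 1
  have hgmono : ∀ x ∈ Set.Ioo (0:ℝ) 1, ∀ y ∈ Set.Ioo (0:ℝ) 1, x ≤ y →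
      (x ^ β - x) / (1 - x) ≤ (y ^ β - y) / (1 - y) := by
    intro x hx y hy hxy
    have hx1 : x ≠ 1 := ne_of_lt hx.2
    have hy1 : y ≠ 1 := ne_of_lt hy.2
    have key := hconv.secant_mono (a := 1) (x := x) (y := y)
      (by norm_num) (le_of_lt hx.1) (le_of_lt hy.1) hx1 hy1 hxy
    have h1 : ((1:ℝ) ^ β - 1) = 0 := by simp [Real.one_rpow]
    have hx2 : x - 1 ≠ 0 := sub_ne_zero.mpr hx1
    have hy2 : y - 1 ≠ 0 := sub_ne_zero.mpr hy1
    rw [h1] at key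
    have gen : ∀ a b : ℝ, b ≠ 1 → (-a - -0) / (b - 1) = a / (1 - b) := by
      intro a b hb
      have h2 : b - 1 ≠ 0 := sub_ne_zero.mpr hb
      have h3 : (1:ℝ) - b ≠ 0 := sub_ne_zero.mpr (Ne.symm hb)
      field_simp
      ring
    rw [gen _ _ hx1, gen _ _ hy1] at key
    exact key
  -- rewrite γ as α / g
  have hrew : ∀ u ∈ Set.Ioo (0:ℝ) 1,
      α * (1 - u) * u ^ (α - 1) / (1 - u ^ α) = α / ((u ^ β - u) / (1 - u)) := by
    intro u hu
    have hu0 : (0:ℝ) < u := hu.1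
    have hu1 : u < 1 := hu.2
    have h1u : (0:ℝ) < 1 - u := by linarith
    have hua : u ^ α < 1 := Real.rpow_lt_one hu0.le hu1 hα0
    have h1ua : (0:ℝ) < 1 - u ^ α := by linarith
    have hub : u < u ^ β := by
      have := Real.rpow_lt_rpow_of_exponent_gt hu0 hu1 hβ1
      simpa [Real.rpow_one] using this
    have hgd : (0:ℝ) < u ^ β - u := by linarith
    have hid2 : u ^ (α - 1) * u = u ^ α := by
      rw [show u ^ (α - 1) * u = u ^ (α - 1) * u ^ (1:ℝ) from by rw [Real.rpow_one],
        ← Real.rpow_add hu0]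
      norm_num
    have hid3 : u ^ (α - 1) * u ^ β = 1 := by
      rw [← Real.rpow_add hu0, show α - 1 + β = 0 from by rw [hβ]; ring, Real.rpow_zero]
    rw [div_div_eq_mul_div, div_eq_div_iff h1ua.ne' hgd.ne']
    linear_combination (α * (1 - u)) * hid3 - (α * (1 - u)) * hid2
  -- conclude
  intro x hx y hy hxy
  simp only
  rw [hrew x hx, hrew y hy]
  exact div_le_div_of_nonneg_left hα0.le (hgpos x hx) (hgmono x hx y hy hxy)
end

section
/- For each fixed α ≥ 1, the function u ↦ α(1 - u)u^(α-1) / (1 - u^α) is increasing in u on (0, 1). -/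
theorem gamma_increasing_in_u (α : ℝ) (hα : 1 ≤ α) :
    MonotoneOn (fun u : ℝ => α * (1 - u) * u ^ (α - 1) / (1 - u ^ α)) (Set.Ioo (0 : ℝ) 1) := by
  have hα0 : (0:ℝ) < α := lt_of_lt_of_le one_pos hα
  have hder : ∀ u ∈ Set.Ioo (0:ℝ) 1,
      HasDerivAt (fun u : ℝ => α * (1 - u) * u ^ (α - 1) / (1 - u ^ α))
        (((α * (-1) * u ^ (α - 1) + α * (1 - u) * ((α - 1) * u ^ (α - 1 - 1))) * (1 - u ^ α)
          - α * (1 - u) * u ^ (α - 1) * (0 - α * u ^ (α - 1))) / (1 - u ^ α) ^ 2) u := by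
    intro u hu
    obtain ⟨hu0, hu1⟩ := hu
    have hne : (1 : ℝ) - u ^ α ≠ 0 := by
      have : u ^ α < 1 := Real.rpow_lt_one (le_of_lt hu0) hu1 hα0
      linarith
    have h1 : HasDerivAt (fun u : ℝ => u ^ (α - 1)) ((α - 1) * u ^ (α - 1 - 1)) u :=
      Real.hasDerivAt_rpow_const (Or.inl (ne_of_gt hu0))
    have h2 : HasDerivAt (fun u : ℝ => α * (1 - u)) (α * (-1)) u := by
      have h : HasDerivAt (fun u : ℝ => 1 - u) (-1) u := by
        simpa using (hasDerivAt_id u).const_sub 1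
      simpa using h.const_mul α
    have hnum : HasDerivAt (fun u : ℝ => α * (1 - u) * u ^ (α - 1))
        (α * (-1) * u ^ (α - 1) + α * (1 - u) * ((α - 1) * u ^ (α - 1 - 1))) u := h2.mul h1
    have h3 : HasDerivAt (fun u : ℝ => u ^ α) (α * u ^ (α - 1)) u :=
      Real.hasDerivAt_rpow_const (Or.inl (ne_of_gt hu0))
    have hden : HasDerivAt (fun u : ℝ => 1 - u ^ α) (0 - α * u ^ (α - 1)) u :=
      (hasDerivAt_const u 1).sub h3
    exact hnum.div hden hne
  apply monotoneOn_of_deriv_nonneg (convex_Ioo 0 1)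
  · intro u hu
    exact ((hder u hu).differentiableAt).continuousAt.continuousWithinAt
  · rw [interior_Ioo]
    intro u hu
    exact ((hder u hu).differentiableAt).differentiableWithinAt
  · rw [interior_Ioo]
    intro u hu
    rw [(hder u hu).deriv]
    obtain ⟨hu0, hu1⟩ := hu
    apply div_nonneg _ (sq_nonneg _)
    set C := u ^ (α - 1 - 1) with hC
    have hCpos : 0 < C := Real.rpow_pos_of_pos hu0 _
    have hA : u ^ (α - 1) = C * u := by
      rw [hC, show α - 1 = (α - 1 - 1) + 1 by ring, Real.rpow_add hu0, Real.rpow_one]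
      ring_nf
    have hB : u ^ α = C * u * u := by
      rw [hC, show α = (α - 1 - 1) + 1 + 1 by ring, Real.rpow_add hu0, Real.rpow_add hu0,
        Real.rpow_one]
      ring_nf
    have hkey : 0 ≤ u ^ α - α * u + α - 1 := by
      have hb := one_add_mul_self_le_rpow_one_add (s := u - 1) (by linarith) hα
      have : (1 : ℝ) + (u - 1) = u := by ring
      rw [this] at hb
      linarith
    rw [hA, hB] at *
    nlinarith [mul_nonneg (mul_pos hα0 hCpos).le hkey, sq_nonneg u, hu0.le]
end

section
/- For each fixed u with 0 < u < 1, the function φ(α) = α·u^(α-1) / (1 - u^α) is convex in α on (0, ∞). -/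
open Real Set Filter

private lemma hA_deriv (x : ℝ) :
    HasDerivAt (fun x : ℝ => (x - 1) * Real.exp x + 1) (x * Real.exp x) x := by
  have h : HasDerivAt (fun x : ℝ => (x - 1) * Real.exp x)
      (1 * Real.exp x + (x - 1) * Real.exp x) x :=
    ((hasDerivAt_id x).sub_const 1).mul (Real.hasDerivAt_exp x)
  have h2 := h.add_const 1
  exact h2.congr_deriv (by ring)

private lemma hB_deriv (x : ℝ) :
    HasDerivAt (fun x : ℝ => (x - 2) * Real.exp x + x + 2)
      ((x - 1) * Real.exp x + 1) x := by
  have h : HasDerivAt (fun x : ℝ => (x - 2) * Real.exp x)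
      (1 * Real.exp x + (x - 2) * Real.exp x) x :=
    ((hasDerivAt_id x).sub_const 2).mul (Real.hasDerivAt_exp x)
  have h2 := (h.add (hasDerivAt_id x)).add_const 2
  exact h2.congr_deriv (by ring)

private lemma hpos (x : ℝ) (hx : 0 ≤ x) : 0 ≤ (x - 2) * Real.exp x + x + 2 := by
  have h1 : MonotoneOn (fun x : ℝ => (x - 1) * Real.exp x + 1) (Ici 0) := by
    apply monotoneOn_of_deriv_nonneg (convex_Ici 0)
    · exact Continuous.continuousOn (by continuity)
    · intro y _
      exact (hA_deriv y).differentiableAt.differentiableWithinAt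
    · intro y hy
      rw [interior_Ici] at hy
      rw [(hA_deriv y).deriv]
      exact mul_nonneg (le_of_lt hy) (Real.exp_pos y).le
  have hA0 : ∀ y : ℝ, 0 ≤ y → 0 ≤ (y - 1) * Real.exp y + 1 := by
    intro y hy
    have := h1 (self_mem_Ici) (mem_Ici.2 hy) hy
    simpa [Real.exp_zero] using this
  have h2 : MonotoneOn (fun x : ℝ => (x - 2) * Real.exp x + x + 2) (Ici 0) := by
    apply monotoneOn_of_deriv_nonneg (convex_Ici 0)
    · exact Continuous.continuousOn (by continuity)
    · intro y _
      exact (hB_deriv y).differentiableAt.differentiableWithinAt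
    · intro y hy
      rw [interior_Ici] at hy
      rw [(hB_deriv y).deriv]
      exact hA0 y hy.le
  have := h2 (self_mem_Ici) (mem_Ici.2 hx) hx
  simpa [Real.exp_zero] using this

private noncomputable def gfun : ℝ → ℝ := fun x => x / (Real.exp x - 1)

private noncomputable def g1 : ℝ → ℝ := fun x =>
  (1 * (Real.exp x - 1) - x * Real.exp x) / (Real.exp x - 1) ^ 2

private lemma hEpos {x : ℝ} (hx : 0 < x) : 0 < Real.exp x - 1 := by
  linarith [Real.add_one_le_exp x]

private lemma hg_deriv {x : ℝ} (hx : 0 < x) : HasDerivAt gfun (g1 x) x := by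
  have hne : Real.exp x - 1 ≠ 0 := (hEpos hx).ne'
  have := (hasDerivAt_id x).div ((Real.hasDerivAt_exp x).sub_const 1) hne
  exact this

private lemma hg1_deriv {x : ℝ} (hx : 0 < x) :
    HasDerivAt g1
      (((Real.exp x - (Real.exp x + x * Real.exp x)) * (Real.exp x - 1) ^ 2 -
        (1 * (Real.exp x - 1) - x * Real.exp x) *
          (2 * (Real.exp x - 1) ^ 1 * Real.exp x)) / ((Real.exp x - 1) ^ 2) ^ 2) x := by
  have hne : Real.exp x - 1 ≠ 0 := (hEpos hx).ne'
  have hnum : HasDerivAt (fun x : ℝ => 1 * (Real.exp x - 1) - x * Real.exp x)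
      (Real.exp x - (Real.exp x + x * Real.exp x)) x := by
    have h1 : HasDerivAt (fun x : ℝ => 1 * (Real.exp x - 1)) (Real.exp x) x := by
      have := (Real.hasDerivAt_exp x).sub_const 1
      simpa using this.const_mul 1
    have h2 : HasDerivAt (fun x : ℝ => x * Real.exp x)
        (1 * Real.exp x + x * Real.exp x) x :=
      (hasDerivAt_id x).mul (Real.hasDerivAt_exp x)
    have := h1.sub h2
    exact this.congr_deriv (by ring)
  have hden : HasDerivAt (fun x : ℝ => (Real.exp x - 1) ^ 2)
      (2 * (Real.exp x - 1) ^ 1 * Real.exp x) x := by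
    have := ((Real.hasDerivAt_exp x).sub_const 1).pow 2
    exact this.congr_deriv (by norm_num)
  have hdne : (Real.exp x - 1) ^ 2 ≠ 0 := pow_ne_zero 2 hne
  exact hnum.div hden hdne

private lemma gconv : ConvexOn ℝ (Set.Ioi (0 : ℝ)) gfun := by
  have hint : interior (Set.Ioi (0 : ℝ)) = Set.Ioi 0 := interior_Ioi
  have hderiv_eq : ∀ x ∈ Set.Ioi (0 : ℝ), deriv gfun =ᶠ[nhds x] g1 := by
    intro x hx
    filter_upwards [isOpen_Ioi.mem_nhds hx] with y hy
    exact (hg_deriv hy).deriv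
  apply convexOn_of_deriv2_nonneg (convex_Ioi 0)
  · intro x hx
    exact (hg_deriv hx).differentiableAt.continuousAt.continuousWithinAt
  · rw [hint]
    intro x hx
    exact (hg_deriv hx).differentiableAt.differentiableWithinAt
  · rw [hint]
    intro x hx
    have := ((hg1_deriv hx).congr_of_eventuallyEq (hderiv_eq x hx)).differentiableAt
    exact this.differentiableWithinAt
  · rw [hint]
    intro x hx
    have heq : deriv^[2] gfun x = deriv (deriv gfun) x := by
      simp [Function.iterate_succ, Function.comp]
    rw [heq, (hderiv_eq x hx).deriv_eq,
      (hg1_deriv hx).deriv]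
    have hE := hEpos hx
    have hh := hpos x (le_of_lt hx)
    apply div_nonneg _ (by positivity)
    have hfac : (Real.exp x - (Real.exp x + x * Real.exp x)) * (Real.exp x - 1) ^ 2 -
        (1 * (Real.exp x - 1) - x * Real.exp x) * (2 * (Real.exp x - 1) ^ 1 * Real.exp x) =
        (Real.exp x - 1) * Real.exp x * ((x - 2) * Real.exp x + x + 2) := by ring
    rw [hfac]
    exact mul_nonneg (mul_nonneg hE.le (Real.exp_pos x).le) hh

theorem varphi_convex_in_alpha (u : ℝ) (hu0 : 0 < u) (hu1 : u < 1) :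
    ConvexOn ℝ (Set.Ioi (0 : ℝ)) (fun α : ℝ => α * u ^ (α - 1) / (1 - u ^ α)) := by
  set t : ℝ := -Real.log u with ht_def
  have hlu : Real.log u < 0 := Real.log_neg hu0 hu1
  have ht : 0 < t := by simp [ht_def]; linarith
  have hune : u ≠ 0 := hu0.ne'
  have key : ∀ α : ℝ, 0 < α →
      α * u ^ (α - 1) / (1 - u ^ α) = (1 / (u * t)) * gfun (t * α) := by
    intro α hα
    have hta : 0 < t * α := mul_pos ht hα
    have hE : 0 < Real.exp (t * α) - 1 := hEpos hta
    have hEx : Real.exp (t * α) ≠ 0 := (Real.exp_pos _).ne'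
    have h1 : u ^ α = 1 / Real.exp (t * α) := by
      rw [Real.rpow_def_of_pos hu0, ht_def]
      rw [one_div, ← Real.exp_neg]
      ring_nf
    have h2 : u ^ (α - 1 : ℝ) = (1 / Real.exp (t * α)) / u := by
      rw [Real.rpow_sub hu0, Real.rpow_one, h1]
    rw [h1, h2, gfun]
    field_simp
  constructor
  · exact convex_Ioi 0
  · intro x hx y hy a b ha hb hab
    have hx' : (0:ℝ) < x := hx
    have hy' : (0:ℝ) < y := hy
    have hz : (0:ℝ) < a * x + b * y := by
      have hm : 0 < min x y := lt_min hx' hy'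
      have h1 : a * min x y ≤ a * x := mul_le_mul_of_nonneg_left (min_le_left x y) ha
      have h2 : b * min x y ≤ b * y := mul_le_mul_of_nonneg_left (min_le_right x y) hb
      nlinarith
    have hgx : t * x ∈ Set.Ioi (0:ℝ) := mul_pos ht hx'
    have hgy : t * y ∈ Set.Ioi (0:ℝ) := mul_pos ht hy'
    have hineq := gconv.2 hgx hgy ha hb hab
    simp only [smul_eq_mul] at hineq ⊢
    rw [key _ hz, key _ hx', key _ hy']
    have harg : t * (a * x + b * y) = a * (t * x) + b * (t * y) := by ring
    rw [harg]
    have hc : 0 ≤ 1 / (u * t) := by positivity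
    calc 1 / (u * t) * gfun (a * (t * x) + b * (t * y))
        ≤ 1 / (u * t) * (a * gfun (t * x) + b * gfun (t * y)) :=
          mul_le_mul_of_nonneg_left hineq hc
      _ = a * (1 / (u * t) * gfun (t * x)) + b * (1 / (u * t) * gfun (t * y)) := by ring
end

section
/- Let F̄(θ₁, θ₂, α₁, α₂)(x) = (1 - e^(-θ₁x^(-φ)))^(α₁) · (1 - e^(-θ₂x^(-φ)))^(α₂) be the reliability function of the minimum of two independent EG₂(θᵢ, φ, αᵢ) random variables, for a fixed x > 0 and φ > 0. If (α₁ - α₂)(θ₁ - θ₂) ≤ 0, then (α₁ - α₂)(∂F̄/∂α₁ - ∂F̄/∂α₂) + (θ₁ - θ₂)(∂F̄/∂θ₁ - ∂F̄/∂θ₂) ≤ 0. -/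
open Real

theorem schur_condition_min (x φ θ₁ θ₂ α₁ α₂ : ℝ) (hx : 0 < x) (hφ : 0 < φ)
    (hθ₁ : 0 < θ₁) (hθ₂ : 0 < θ₂) (hα₁ : 0 < α₁) (hα₂ : 0 < α₂)
    (hS : (α₁ - α₂) * (θ₁ - θ₂) ≤ 0) :
    let Fb : ℝ → ℝ → ℝ → ℝ → ℝ := fun a₁ a₂ t₁ t₂ =>
      (1 - Real.exp (-t₁ * x ^ (-φ))) ^ a₁ * (1 - Real.exp (-t₂ * x ^ (-φ))) ^ a₂
    (α₁ - α₂) * (deriv (fun a => Fb a α₂ θ₁ θ₂) α₁ - deriv (fun a => Fb α₁ a θ₁ θ₂) α₂) +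
      (θ₁ - θ₂) * (deriv (fun t => Fb α₁ α₂ t θ₂) θ₁ - deriv (fun t => Fb α₁ α₂ θ₁ t) θ₂) ≤ 0 := by
  show (α₁ - α₂) * (deriv (fun a => (1 - Real.exp (-θ₁ * x ^ (-φ))) ^ a *
            (1 - Real.exp (-θ₂ * x ^ (-φ))) ^ α₂) α₁ -
          deriv (fun a => (1 - Real.exp (-θ₁ * x ^ (-φ))) ^ α₁ *
            (1 - Real.exp (-θ₂ * x ^ (-φ))) ^ a) α₂) +
      (θ₁ - θ₂) * (deriv (fun t => (1 - Real.exp (-t * x ^ (-φ))) ^ α₁ *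
            (1 - Real.exp (-θ₂ * x ^ (-φ))) ^ α₂) θ₁ -
          deriv (fun t => (1 - Real.exp (-θ₁ * x ^ (-φ))) ^ α₁ *
            (1 - Real.exp (-t * x ^ (-φ))) ^ α₂) θ₂) ≤ 0
  set c : ℝ := x ^ (-φ) with hc
  have hcpos : 0 < c := Real.rpow_pos_of_pos hx _
  set e₁ : ℝ := Real.exp (-θ₁ * c) with he₁
  set e₂ : ℝ := Real.exp (-θ₂ * c) with he₂
  have he₁pos : 0 < e₁ := Real.exp_pos _
  have he₂pos : 0 < e₂ := Real.exp_pos _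
  have he₁lt : e₁ < 1 := by
    rw [he₁]; apply Real.exp_lt_one_iff.mpr; nlinarith
  have he₂lt : e₂ < 1 := by
    rw [he₂]; apply Real.exp_lt_one_iff.mpr; nlinarith
  set u₁ : ℝ := 1 - e₁ with hu₁
  set u₂ : ℝ := 1 - e₂ with hu₂
  have hu₁pos : 0 < u₁ := by rw [hu₁]; linarith
  have hu₂pos : 0 < u₂ := by rw [hu₂]; linarith
  have d1 : deriv (fun a => u₁ ^ a * u₂ ^ α₂) α₁ = u₁ ^ α₁ * Real.log u₁ * u₂ ^ α₂ :=
    ((Real.hasStrictDerivAt_const_rpow hu₁pos α₁).hasDerivAt.mul_const (u₂ ^ α₂)).deriv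
  have d2 : deriv (fun a => u₁ ^ α₁ * u₂ ^ a) α₂ = u₁ ^ α₁ * (u₂ ^ α₂ * Real.log u₂) :=
    ((Real.hasStrictDerivAt_const_rpow hu₂pos α₂).hasDerivAt.const_mul (u₁ ^ α₁)).deriv
  have inner1 : HasDerivAt (fun t : ℝ => 1 - Real.exp (-t * c)) (c * e₁) θ₁ := by
    have h1 : HasDerivAt (fun t : ℝ => -t * c) (-c) θ₁ := by
      simpa using ((hasDerivAt_id θ₁).neg.mul_const c)
    have h3 := h1.exp.const_sub 1
    rw [he₁]; exact h3.congr_deriv (by ring)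
  have inner2 : HasDerivAt (fun t : ℝ => 1 - Real.exp (-t * c)) (c * e₂) θ₂ := by
    have h1 : HasDerivAt (fun t : ℝ => -t * c) (-c) θ₂ := by
      simpa using ((hasDerivAt_id θ₂).neg.mul_const c)
    have h3 := h1.exp.const_sub 1
    rw [he₂]; exact h3.congr_deriv (by ring)
  have d3 : deriv (fun t => (1 - Real.exp (-t * c)) ^ α₁ * u₂ ^ α₂) θ₁
      = α₁ * u₁ ^ (α₁ - 1) * (c * e₁) * u₂ ^ α₂ := by
    have h := ((Real.hasDerivAt_rpow_const (p := α₁) (x := u₁)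
      (Or.inl (ne_of_gt hu₁pos))).comp θ₁ inner1).mul_const (u₂ ^ α₂)
    exact h.deriv
  have d4 : deriv (fun t => u₁ ^ α₁ * (1 - Real.exp (-t * c)) ^ α₂) θ₂
      = u₁ ^ α₁ * (α₂ * u₂ ^ (α₂ - 1) * (c * e₂)) := by
    have h := ((Real.hasDerivAt_rpow_const (p := α₂) (x := u₂)
      (Or.inl (ne_of_gt hu₂pos))).comp θ₂ inner2).const_mul (u₁ ^ α₁)
    exact h.deriv
  rw [d1, d2, d3, d4]
  have hq₁ : u₁ ^ α₁ = u₁ ^ (α₁ - 1) * u₁ := by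
    rw [← Real.rpow_add_one (ne_of_gt hu₁pos)]; ring_nf
  have hq₂ : u₂ ^ α₂ = u₂ ^ (α₂ - 1) * u₂ := by
    rw [← Real.rpow_add_one (ne_of_gt hu₂pos)]; ring_nf
  rw [hq₁, hq₂]
  set q₁ : ℝ := u₁ ^ (α₁ - 1) with hq1d
  set q₂ : ℝ := u₂ ^ (α₂ - 1) with hq2d
  have hq₁pos : 0 < q₁ := Real.rpow_pos_of_pos hu₁pos _
  have hq₂pos : 0 < q₂ := Real.rpow_pos_of_pos hu₂pos _
  set L₁ : ℝ := Real.log u₁ with hL₁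
  set L₂ : ℝ := Real.log u₂ with hL₂
  have factored :
      (α₁ - α₂) * (q₁ * u₁ * L₁ * (q₂ * u₂) - q₁ * u₁ * (q₂ * u₂ * L₂)) +
        (θ₁ - θ₂) * (α₁ * q₁ * (c * e₁) * (q₂ * u₂) - q₁ * u₁ * (α₂ * q₂ * (c * e₂)))
      = q₁ * q₂ * ((α₁ - α₂) * (u₁ * u₂) * (L₁ - L₂)
          + c * (θ₁ - θ₂) * (α₁ * e₁ * u₂ - α₂ * e₂ * u₁)) := by ring
  rw [factored]
  apply mul_nonpos_of_nonneg_of_nonpos (le_of_lt (mul_pos hq₁pos hq₂pos))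
  have hee12 : θ₁ ≤ θ₂ → e₂ ≤ e₁ := fun h => by
    rw [he₁, he₂]; apply Real.exp_le_exp.mpr; nlinarith
  have hee21 : θ₂ ≤ θ₁ → e₁ ≤ e₂ := fun h => by
    rw [he₁, he₂]; apply Real.exp_le_exp.mpr; nlinarith
  have huu12 : e₂ ≤ e₁ → u₁ ≤ u₂ := fun h => by rw [hu₁, hu₂]; linarith
  have huu21 : e₁ ≤ e₂ → u₂ ≤ u₁ := fun h => by rw [hu₁, hu₂]; linarith
  have hLL12 : u₁ ≤ u₂ → L₁ ≤ L₂ := fun h => by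
    rw [hL₁, hL₂]; exact Real.log_le_log hu₁pos h
  have hLL21 : u₂ ≤ u₁ → L₂ ≤ L₁ := fun h => by
    rw [hL₁, hL₂]; exact Real.log_le_log hu₂pos h
  clear_value q₁ q₂ L₁ L₂ c e₁ e₂ u₁ u₂
  clear d1 d2 d3 d4 inner1 inner2 factored hq₁ hq₂ hq1d hq2d hL₁ hL₂ hc he₁ he₂ hu₁ hu₂ hx hφ
  rcases lt_trichotomy θ₁ θ₂ with hθ | hθ | hθ
  · have hα : α₂ ≤ α₁ := by rcases mul_nonpos_iff.mp hS with ⟨h1, h2⟩ | ⟨h1, h2⟩ <;> linarith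
    have hee := hee12 (le_of_lt hθ)
    have huu := huu12 hee
    have hLL := hLL12 huu
    have hT1 : (α₁ - α₂) * (u₁ * u₂) * (L₁ - L₂) ≤ 0 :=
      mul_nonpos_of_nonneg_of_nonpos
        (mul_nonneg (sub_nonneg.2 hα) (mul_pos hu₁pos hu₂pos).le) (sub_nonpos.2 hLL)
    have hT2 : c * (θ₁ - θ₂) * (α₁ * e₁ * u₂ - α₂ * e₂ * u₁) ≤ 0 := by
      have h2 : α₂ * e₂ * u₁ ≤ α₁ * e₁ * u₂ :=
        mul_le_mul (mul_le_mul hα hee he₂pos.le hα₁.le) huu hu₁pos.le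
          (mul_nonneg hα₁.le he₁pos.le)
      have h3 : c * (θ₁ - θ₂) ≤ 0 :=
        mul_nonpos_of_nonneg_of_nonpos hcpos.le (by linarith)
      exact mul_nonpos_of_nonpos_of_nonneg h3 (by linarith)
    linarith
  · have hee : e₁ = e₂ := le_antisymm (hee21 (le_of_eq hθ.symm)) (hee12 (le_of_eq hθ))
    have huu : u₁ = u₂ := le_antisymm (huu12 (le_of_eq hee.symm)) (huu21 (le_of_eq hee))
    have hLL : L₁ = L₂ := le_antisymm (hLL12 (le_of_eq huu)) (hLL21 (le_of_eq huu.symm))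
    rw [hθ, hLL]; ring_nf
    exact le_refl 0
  · have hα : α₁ ≤ α₂ := by rcases mul_nonpos_iff.mp hS with ⟨h1, h2⟩ | ⟨h1, h2⟩ <;> linarith
    have hee := hee21 (le_of_lt hθ)
    have huu := huu21 hee
    have hLL := hLL21 huu
    have hT1 : (α₁ - α₂) * (u₁ * u₂) * (L₁ - L₂) ≤ 0 :=
      mul_nonpos_of_nonpos_of_nonneg
        (mul_nonpos_of_nonpos_of_nonneg (sub_nonpos.2 hα) (mul_pos hu₁pos hu₂pos).le)
        (sub_nonneg.2 hLL)
    have hT2 : c * (θ₁ - θ₂) * (α₁ * e₁ * u₂ - α₂ * e₂ * u₁) ≤ 0 := by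
      have h2 : α₁ * e₁ * u₂ ≤ α₂ * e₂ * u₁ :=
        mul_le_mul (mul_le_mul hα hee he₁pos.le hα₂.le) huu hu₂pos.le
          (mul_nonneg hα₂.le he₂pos.le)
      have h3 : 0 ≤ c * (θ₁ - θ₂) := mul_nonneg hcpos.le (by linarith)
      exact mul_nonpos_of_nonneg_of_nonpos h3 (by linarith)
    linarith
end

section
/- Let X₁, X₂ be independent with Xᵢ ~ EG₂(θᵢ, φ, αᵢ) and X₁*, X₂* be independent with Xᵢ* ~ EG₂(θᵢ*, φ, αᵢ*). Suppose (α₁-α₂)(θ₁-θ₂) ≤ 0 (the parameter matrix is in S₂) and the matrix [[α₁*, α₂*], [θ₁*, θ₂*]] equals [[α₁, α₂], [θ₁, θ₂]] multiplied on the right by a T-transform matrix T_w = wI + (1-w)Π for some w ∈ [0,1], where Π is the 2×2 permutation matrix swapping coordinates. Then min(X₁, X₂) ≤_st min(X₁*, X₂*), i.e., for all x > 0, (1-e^(-θ₁x^(-φ)))^(α₁)(1-e^(-θ₂x^(-φ)))^(α₂) ≤ (1-e^(-θ₁*x^(-φ)))^(α₁*)(1-e^(-θ₂*x^(-φ)))^(α₂*).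 -/
set_option maxHeartbeats 1000000 in
theorem min_st_order_chain_majorization (φ θ₁ θ₂ α₁ α₂ θ₁' θ₂' α₁' α₂' w : ℝ)
    (hφ : 0 < φ) (hθ₁ : 0 < θ₁) (hθ₂ : 0 < θ₂) (hα₁ : 0 < α₁) (hα₂ : 0 < α₂)
    (hS : (α₁ - α₂) * (θ₁ - θ₂) ≤ 0)
    (hw : w ∈ Set.Icc (0 : ℝ) 1)
    (hα₁' : α₁' = w * α₁ + (1 - w) * α₂) (hα₂' : α₂' = w * α₂ + (1 - w) * α₁)
    (hθ₁' : θ₁' = w * θ₁ + (1 - w) * θ₂) (hθ₂' : θ₂' = w * θ₂ + (1 - w) * θ₁) :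
    ∀ x : ℝ, 0 < x →
      (1 - Real.exp (-θ₁ * x ^ (-φ))) ^ α₁ * (1 - Real.exp (-θ₂ * x ^ (-φ))) ^ α₂ ≤
        (1 - Real.exp (-θ₁' * x ^ (-φ))) ^ α₁' * (1 - Real.exp (-θ₂' * x ^ (-φ))) ^ α₂' := by
  obtain ⟨hw0, hw1⟩ := hw
  intro x hx
  set t : ℝ := x ^ (-φ) with ht_def
  have ht : 0 < t := Real.rpow_pos_of_pos hx _
  set a : ℝ := Real.exp (-θ₁ * t) with ha_def
  set b : ℝ := Real.exp (-θ₂ * t) with hb_def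
  have ha0 : 0 < a := Real.exp_pos _
  have hb0 : 0 < b := Real.exp_pos _
  have ha1 : a < 1 := by
    apply Real.exp_lt_one_iff.mpr
    have := mul_pos hθ₁ ht
    linarith
  have hb1 : b < 1 := by
    apply Real.exp_lt_one_iff.mpr
    have := mul_pos hθ₂ ht
    linarith
  set g₁ : ℝ := 1 - a with hg₁_def
  set g₂ : ℝ := 1 - b with hg₂_def
  have hg₁0 : 0 < g₁ := by simp [hg₁_def]; linarith
  have hg₂0 : 0 < g₂ := by simp [hg₂_def]; linarith
  have hw1' : 0 ≤ 1 - w := by linarith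
  -- exponential of convex combination as geometric mean
  have hE1 : Real.exp (-θ₁' * t) = a ^ w * b ^ (1 - w) := by
    rw [ha_def, hb_def, ← Real.exp_mul, ← Real.exp_mul, ← Real.exp_add, hθ₁']
    ring_nf
  have hE2 : Real.exp (-θ₂' * t) = b ^ w * a ^ (1 - w) := by
    rw [ha_def, hb_def, ← Real.exp_mul, ← Real.exp_mul, ← Real.exp_add, hθ₂']
    ring_nf
  -- GM ≤ AM based key inequalities
  have key1 : g₁ ^ w * g₂ ^ (1 - w) ≤ 1 - Real.exp (-θ₁' * t) := by
    rw [hE1]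
    have h1 : a ^ w * b ^ (1 - w) ≤ w * a + (1 - w) * b :=
      Real.geom_mean_le_arith_mean2_weighted hw0 hw1' ha0.le hb0.le (by ring)
    have h2 : g₁ ^ w * g₂ ^ (1 - w) ≤ w * g₁ + (1 - w) * g₂ :=
      Real.geom_mean_le_arith_mean2_weighted hw0 hw1' hg₁0.le hg₂0.le (by ring)
    have : w * g₁ + (1 - w) * g₂ = 1 - (w * a + (1 - w) * b) := by
      rw [hg₁_def, hg₂_def]; ring
    linarith
  have key2 : g₂ ^ w * g₁ ^ (1 - w) ≤ 1 - Real.exp (-θ₂' * t) := by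
    rw [hE2]
    have h1 : b ^ w * a ^ (1 - w) ≤ w * b + (1 - w) * a :=
      Real.geom_mean_le_arith_mean2_weighted hw0 hw1' hb0.le ha0.le (by ring)
    have h2 : g₂ ^ w * g₁ ^ (1 - w) ≤ w * g₂ + (1 - w) * g₁ :=
      Real.geom_mean_le_arith_mean2_weighted hw0 hw1' hg₂0.le hg₁0.le (by ring)
    have : w * g₂ + (1 - w) * g₁ = 1 - (w * b + (1 - w) * a) := by
      rw [hg₁_def, hg₂_def]; ring
    linarith
  have hα₁'0 : 0 ≤ α₁' := by
    rw [hα₁']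
    have h1 := mul_nonneg hw0 hα₁.le
    have h2 := mul_nonneg hw1' hα₂.le
    linarith
  have hα₂'0 : 0 ≤ α₂' := by
    rw [hα₂']
    have h1 := mul_nonneg hw0 hα₂.le
    have h2 := mul_nonneg hw1' hα₁.le
    linarith
  set c : ℝ := 2 * w * (1 - w) * (α₂ - α₁) with hc_def
  have hww : 0 ≤ 2 * w * (1 - w) :=
    mul_nonneg (mul_nonneg (by norm_num) hw0) hw1'
  have hcθ : 0 ≤ c * (θ₁ - θ₂) := by
    have h := mul_nonneg hww (neg_nonneg.2 hS)
    calc (0:ℝ) ≤ 2 * w * (1 - w) * (-((α₁ - α₂) * (θ₁ - θ₂))) := h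
    _ = c * (θ₁ - θ₂) := by rw [hc_def]; ring
  -- the crucial rpow comparison
  have hkey : g₂ ^ c ≤ g₁ ^ c := by
    rcases lt_trichotomy θ₁ θ₂ with h | h | h
    · -- θ₁ < θ₂ : g₁ ≤ g₂ and c ≤ 0
      have hc0 : c ≤ 0 := by nlinarith [hcθ, h]
      have hab : b ≤ a := by
        apply Real.exp_le_exp.mpr
        have := mul_lt_mul_of_pos_right h ht
        linarith
      have hg : g₁ ≤ g₂ := by rw [hg₁_def, hg₂_def]; linarith
      exact Real.rpow_le_rpow_of_nonpos hg₁0 hg hc0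
    · simp [hg₁_def, hg₂_def, ha_def, hb_def, h]
    · -- θ₂ < θ₁ : g₂ ≤ g₁ and 0 ≤ c
      have hc0 : 0 ≤ c := by nlinarith [hcθ, h]
      have hab : a ≤ b := by
        apply Real.exp_le_exp.mpr
        have := mul_lt_mul_of_pos_right h ht
        linarith
      have hg : g₂ ≤ g₁ := by rw [hg₁_def, hg₂_def]; linarith
      exact Real.rpow_le_rpow hg₂0.le hg hc0
  have combine : ∀ p q r s : ℝ, g₁ ^ p * g₂ ^ q * (g₂ ^ r * g₁ ^ s)
      = g₁ ^ (p + s) * g₂ ^ (q + r) := by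
    intro p q r s
    rw [Real.rpow_add hg₁0, Real.rpow_add hg₂0]; ring
  calc g₁ ^ α₁ * g₂ ^ α₂
      = g₁ ^ α₁ * g₂ ^ (α₂ - c) * g₂ ^ c := by
        rw [mul_assoc, ← Real.rpow_add hg₂0]; ring_nf
    _ ≤ g₁ ^ α₁ * g₂ ^ (α₂ - c) * g₁ ^ c := by
        apply mul_le_mul_of_nonneg_left hkey
        positivity
    _ = g₁ ^ (α₁ + c) * g₂ ^ (α₂ - c) := by
        rw [mul_assoc, mul_comm (g₂ ^ (α₂ - c)), ← mul_assoc, ← Real.rpow_add hg₁0]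
    _ = (g₁ ^ w * g₂ ^ (1 - w)) ^ α₁' * (g₂ ^ w * g₁ ^ (1 - w)) ^ α₂' := by
        rw [Real.mul_rpow (Real.rpow_nonneg hg₁0.le _) (Real.rpow_nonneg hg₂0.le _),
          Real.mul_rpow (Real.rpow_nonneg hg₂0.le _) (Real.rpow_nonneg hg₁0.le _),
          ← Real.rpow_mul hg₁0.le, ← Real.rpow_mul hg₂0.le,
          ← Real.rpow_mul hg₂0.le, ← Real.rpow_mul hg₁0.le, combine]
        rw [show w * α₁' + (1 - w) * α₂' = α₁ + c by rw [hα₁', hα₂', hc_def]; ring,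
          show (1 - w) * α₁' + w * α₂' = α₂ - c by rw [hα₁', hα₂', hc_def]; ring]
    _ ≤ (1 - Real.exp (-θ₁' * t)) ^ α₁' * (1 - Real.exp (-θ₂' * t)) ^ α₂' := by
        have hb1' : 0 < g₁ ^ w * g₂ ^ (1 - w) :=
          mul_pos (Real.rpow_pos_of_pos hg₁0 _) (Real.rpow_pos_of_pos hg₂0 _)
        have hb2' : 0 < g₂ ^ w * g₁ ^ (1 - w) :=
          mul_pos (Real.rpow_pos_of_pos hg₂0 _) (Real.rpow_pos_of_pos hg₁0 _)
        apply mul_le_mul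
        · exact Real.rpow_le_rpow hb1'.le key1 hα₁'0
        · exact Real.rpow_le_rpow hb2'.le key2 hα₂'0
        · exact Real.rpow_nonneg hb2'.le _
        · exact Real.rpow_nonneg (hb1'.trans_le key1).le _
end

section
/- Let X₁,...,Xₙ be independent with Xᵢ ~ EG₂(θ, φ, αᵢ) and X₁*,...,Xₙ* independent with Xᵢ* ~ EG₂(θ, φ, αᵢ*), all with common θ, φ > 0. If (α₁,...,αₙ) majorizes (α₁*,...,αₙ*), then max(X₁,...,Xₙ) ≥_rf max(X₁*,...,Xₙ*): for every x > 0, the reversed failure rate of the maximum for the α-parameters is at least that for the α*-parameters, i.e., θφx^(-φ-1)e^(-θx^(-φ)) Σᵢ αᵢ(1-e^(-θx^(-φ)))^(αᵢ-1)/(1-(1-e^(-θx^(-φ)))^(αᵢ)) ≥ θφx^(-φ-1)e^(-θx^(-φ)) Σᵢ αᵢ*(1-e^(-θx^(-φ)))^(αᵢ*-1)/(1-(1-e^(-θx^(-φ)))^(αᵢ*)). -/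
open Real Set

/-- `Majorizes a b` : the vector `a` majorizes the vector `b`. -/
def Majorizes {n : ℕ} (a b : Fin n → ℝ) : Prop :=
  (∀ s : Finset (Fin n), ∃ t : Finset (Fin n), t.card = s.card ∧ ∑ i ∈ s, b i ≤ ∑ i ∈ t, a i) ∧
    ∑ i, a i = ∑ i, b i

noncomputable def Fb (s : ℝ) : ℝ := s / (Real.exp s - 1)
noncomputable def F1 (s : ℝ) : ℝ :=
  ((Real.exp s - 1) - s * Real.exp s) / (Real.exp s - 1) ^ 2
noncomputable def F2 (s : ℝ) : ℝ :=
  ((-s * Real.exp s) * (Real.exp s - 1) ^ 2 -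
    ((Real.exp s - 1) - s * Real.exp s) * (2 * (Real.exp s - 1) * Real.exp s)) /
    ((Real.exp s - 1) ^ 2) ^ 2

lemma expD_pos {s : ℝ} (hs : 0 < s) : 0 < Real.exp s - 1 := by
  have : (1:ℝ) < Real.exp s := by
    have := Real.exp_lt_exp.mpr hs
    simpa using this
  linarith

lemma aux_q_nonneg : ∀ s : ℝ, 0 ≤ s → 0 ≤ 1 + (s - 1) * Real.exp s := by
  have hderiv : ∀ s : ℝ, HasDerivAt (fun s => 1 + (s - 1) * Real.exp s) (s * Real.exp s) s := by
    intro s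
    have h1 : HasDerivAt (fun s : ℝ => (s - 1) * Real.exp s)
        (1 * Real.exp s + (s - 1) * Real.exp s) s :=
      ((hasDerivAt_id s).sub_const 1).mul (Real.hasDerivAt_exp s)
    have := h1.const_add 1
    refine this.congr_deriv ?_
    ring
  have hmono : MonotoneOn (fun s => 1 + (s - 1) * Real.exp s) (Ici (0:ℝ)) := by
    apply monotoneOn_of_deriv_nonneg (convex_Ici 0)
    · exact fun s _ => ((hderiv s).continuousAt).continuousWithinAt
    · exact fun s _ => ((hderiv s).differentiableAt).differentiableWithinAt
    · intro s hs
      rw [(hderiv s).deriv]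
      rw [interior_Ici] at hs
      exact mul_nonneg (le_of_lt hs) (Real.exp_pos s).le
  intro s hs
  have := hmono (self_mem_Ici) hs hs
  simpa using this

lemma aux_h_nonneg : ∀ s : ℝ, 0 ≤ s → 0 ≤ 2 + s + (s - 2) * Real.exp s := by
  have hderiv : ∀ s : ℝ, HasDerivAt (fun s => 2 + s + (s - 2) * Real.exp s)
      (1 + (s - 1) * Real.exp s) s := by
    intro s
    have h1 : HasDerivAt (fun s : ℝ => (s - 2) * Real.exp s)
        (1 * Real.exp s + (s - 2) * Real.exp s) s :=
      ((hasDerivAt_id s).sub_const 2).mul (Real.hasDerivAt_exp s)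
    have h2 : HasDerivAt (fun s : ℝ => 2 + s) 1 s := (hasDerivAt_id s).const_add 2
    have := h2.add h1
    refine this.congr_deriv ?_
    ring
  have hmono : MonotoneOn (fun s => 2 + s + (s - 2) * Real.exp s) (Ici (0:ℝ)) := by
    apply monotoneOn_of_deriv_nonneg (convex_Ici 0)
    · exact fun s _ => ((hderiv s).continuousAt).continuousWithinAt
    · exact fun s _ => ((hderiv s).differentiableAt).differentiableWithinAt
    · intro s hs
      rw [(hderiv s).deriv]
      rw [interior_Ici] at hs
      exact aux_q_nonneg s hs.le
  intro s hs
  have := hmono (self_mem_Ici) hs hs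
  simpa using this

lemma hasDerivAt_Fb {s : ℝ} (hs : 0 < s) : HasDerivAt Fb (F1 s) s := by
  have hD : Real.exp s - 1 ≠ 0 := (expD_pos hs).ne'
  have h1 : HasDerivAt (fun s : ℝ => s) 1 s := hasDerivAt_id s
  have h2 : HasDerivAt (fun s : ℝ => Real.exp s - 1) (Real.exp s) s :=
    (Real.hasDerivAt_exp s).sub_const 1
  have := h1.div h2 hD
  refine this.congr_deriv ?_
  simp [F1]

lemma hasDerivAt_F1 {s : ℝ} (hs : 0 < s) : HasDerivAt F1 (F2 s) s := by
  have hD : Real.exp s - 1 ≠ 0 := (expD_pos hs).ne'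
  have hN : HasDerivAt (fun s : ℝ => (Real.exp s - 1) - s * Real.exp s)
      (Real.exp s - (1 * Real.exp s + s * Real.exp s)) s :=
    ((Real.hasDerivAt_exp s).sub_const 1).sub
      ((hasDerivAt_id s).mul (Real.hasDerivAt_exp s))
  have hDen : HasDerivAt (fun s : ℝ => (Real.exp s - 1) ^ 2)
      ((2:ℕ) * (Real.exp s - 1) ^ 1 * Real.exp s) s :=
    ((Real.hasDerivAt_exp s).sub_const 1).pow 2
  have := hN.div hDen (pow_ne_zero 2 hD)
  refine this.congr_deriv ?_
  · simp [F2]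

lemma F2_nonneg {s : ℝ} (hs : 0 < s) : 0 ≤ F2 s := by
  have hD : 0 < Real.exp s - 1 := expD_pos hs
  have hE : 0 < Real.exp s := Real.exp_pos s
  have hh : 0 ≤ 2 + s + (s - 2) * Real.exp s := aux_h_nonneg s hs.le
  have heq : F2 s = Real.exp s * (2 + s + (s - 2) * Real.exp s) / (Real.exp s - 1) ^ 3 := by
    simp only [F2]
    field_simp
    ring
  rw [heq]
  positivity

lemma convexOn_Fb : ConvexOn ℝ (Ioi (0:ℝ)) Fb := by
  apply MonotoneOn.convexOn_of_deriv (convex_Ioi 0)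
  · exact fun s hs => ((hasDerivAt_Fb hs).continuousAt).continuousWithinAt
  · rw [interior_Ioi]
    exact fun s hs => ((hasDerivAt_Fb hs).differentiableAt).differentiableWithinAt
  · rw [interior_Ioi]
    have hF1 : MonotoneOn F1 (Ioi (0:ℝ)) := by
      apply monotoneOn_of_deriv_nonneg (convex_Ioi 0)
      · exact fun s hs => ((hasDerivAt_F1 hs).continuousAt).continuousWithinAt
      · rw [interior_Ioi]
        exact fun s hs => ((hasDerivAt_F1 hs).differentiableAt).differentiableWithinAt
      · rw [interior_Ioi]
        intro s hs
        rw [(hasDerivAt_F1 hs).deriv]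
        exact F2_nonneg hs
    exact hF1.congr fun s hs => ((hasDerivAt_Fb hs).deriv).symm

lemma tangent_line_le {f : ℝ → ℝ} (hf : ConvexOn ℝ (Ioi (0:ℝ)) f) {x y : ℝ}
    (hx : x ∈ Ioi (0:ℝ)) (hy : y ∈ Ioi (0:ℝ)) (hd : DifferentiableAt ℝ f x) :
    f x + deriv f x * (y - x) ≤ f y := by
  rcases lt_trichotomy x y with h | h | h
  · have hs := hf.deriv_le_slope hx hy h hd
    rw [slope_def_field] at hs
    have hxy : 0 < y - x := sub_pos.mpr h
    have := (le_div_iff₀ hxy).mp hs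
    linarith
  · simp [h]
  · have hs := hf.slope_le_deriv hy hx h hd
    rw [slope_def_field] at hs
    have hxy : 0 < x - y := sub_pos.mpr h
    have := (div_le_iff₀ hxy).mp hs
    linarith

lemma card_filter_ge (n k : ℕ) (hk : k ≤ n) :
    ((Finset.univ : Finset (Fin n)).filter fun i : Fin n => k ≤ (i : ℕ)).card = n - k := by
  have h : ((Finset.univ : Finset (Fin n)).filter fun i : Fin n => k ≤ (i : ℕ)).card
      = (Finset.Ico k n).card := by
    refine Finset.card_bij (fun i _ => (i : ℕ)) ?_ ?_ ?_
    · intro a ha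
      simp only [Finset.mem_filter, Finset.mem_univ, true_and] at ha
      simp [Finset.mem_Ico, ha, a.isLt]
    · intro a _ b _ hab
      exact Fin.val_injective hab
    · intro c hc
      simp only [Finset.mem_Ico] at hc
      exact ⟨⟨c, hc.2⟩, by simp [hc.1], rfl⟩
  rw [h, Nat.card_Ico]

lemma sum_le_sum_top {n : ℕ} (A : Fin n → ℝ) (hA : Monotone A) (u : Finset (Fin n)) :
    ∑ i ∈ u, A i ≤ ∑ i ∈ Finset.univ.filter (fun i : Fin n => n - u.card ≤ (i : ℕ)), A i := by
  classical
  set k := u.card with hk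
  have hkn : k ≤ n := by
    simpa using Finset.card_le_univ u
  set v := Finset.univ.filter (fun i : Fin n => n - k ≤ (i : ℕ)) with hv
  have hcv : v.card = k := by
    rw [hv, card_filter_ge n (n - k) (Nat.sub_le n k), Nat.sub_sub_self hkn]
  have hcards : (u \ v).card = (v \ u).card := by
    have h1 := Finset.card_sdiff_add_card_inter u v
    have h2 := Finset.card_sdiff_add_card_inter v u
    rw [Finset.inter_comm] at h2
    omega
  have hsub : ∑ i ∈ u \ v, A i ≤ ∑ i ∈ v \ u, A i := by
    rcases Nat.eq_zero_or_pos (v \ u).card with h0 | hpos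
    · have h0' : (u \ v).card = 0 := by omega
      rw [Finset.card_eq_zero.mp h0, Finset.card_eq_zero.mp h0']
    · obtain ⟨j, hj⟩ := Finset.card_pos.mp hpos
      have hjv : n - k ≤ (j : ℕ) := by
        have h' := (Finset.mem_sdiff.mp hj).1
        rw [hv] at h'
        simp only [Finset.mem_filter, Finset.mem_univ, true_and] at h'
        exact h'
      have hnk : n - k < n := lt_of_le_of_lt hjv j.isLt
      set p : Fin n := ⟨n - k, hnk⟩ with hp
      calc ∑ i ∈ u \ v, A i ≤ (u \ v).card • A p := by
            apply Finset.sum_le_card_nsmul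
            intro i hi
            apply hA
            have hiv : ¬ (n - k ≤ (i : ℕ)) := by
              have h' := (Finset.mem_sdiff.mp hi).2
              rw [hv] at h'
              simp only [Finset.mem_filter, Finset.mem_univ, true_and] at h'
              exact h'
            have : (i : ℕ) ≤ n - k := by omega
            exact this
        _ = (v \ u).card • A p := by rw [hcards]
        _ ≤ ∑ i ∈ v \ u, A i := by
            apply Finset.card_nsmul_le_sum
            intro i hi
            apply hA
            have h' := (Finset.mem_sdiff.mp hi).1
            rw [hv] at h'
            simp only [Finset.mem_filter, Finset.mem_univ, true_and] at h'
            exact h'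
  have hu : ∑ i ∈ u ∩ v, A i + ∑ i ∈ u \ v, A i = ∑ i ∈ u, A i := by
    rw [Finset.sdiff_eq_filter, ← Finset.filter_mem_eq_inter]
    exact Finset.sum_filter_add_sum_filter_not u (· ∈ v) A
  have hvs : ∑ i ∈ v ∩ u, A i + ∑ i ∈ v \ u, A i = ∑ i ∈ v, A i := by
    rw [Finset.sdiff_eq_filter, ← Finset.filter_mem_eq_inter]
    exact Finset.sum_filter_add_sum_filter_not v (· ∈ u) A
  rw [Finset.inter_comm] at hvs
  linarith

lemma abel_nonneg (n : ℕ) (c d : ℕ → ℝ)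
    (hc : ∀ i, i + 1 < n → c i ≤ c (i + 1))
    (hd : ∀ k, k ≤ n → ∑ i ∈ Finset.range k, d i ≤ 0)
    (hdn : ∑ i ∈ Finset.range n, d i = 0) :
    0 ≤ ∑ i ∈ Finset.range n, c i * d i := by
  have h := Finset.sum_range_by_parts c d n
  simp only [smul_eq_mul] at h
  rw [h, hdn, mul_zero, zero_sub, neg_nonneg]
  apply Finset.sum_nonpos
  intro i hi
  rw [Finset.mem_range] at hi
  have hi1 : i + 1 < n := by omega
  have h1 : 0 ≤ c (i + 1) - c i := sub_nonneg.mpr (hc i hi1)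
  have h2 : ∑ j ∈ Finset.range (i + 1), d j ≤ 0 := hd (i + 1) (by omega)
  exact mul_nonpos_of_nonneg_of_nonpos h1 h2

lemma sum_Ico_dite {n : ℕ} (c : Fin n → ℝ) (k : ℕ) :
    ∑ i ∈ Finset.Ico k n, (if h : i < n then c ⟨i, h⟩ else 0)
      = ∑ i ∈ Finset.univ.filter (fun i : Fin n => k ≤ (i : ℕ)), c i := by
  classical
  have h1 : (Finset.range n).filter (fun i => k ≤ i) = Finset.Ico k n := by
    ext i
    simp only [Finset.mem_filter, Finset.mem_range, Finset.mem_Ico]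
    omega
  calc ∑ i ∈ Finset.Ico k n, (if h : i < n then c ⟨i, h⟩ else 0)
      = ∑ i ∈ (Finset.range n).filter (fun i => k ≤ i),
          (if h : i < n then c ⟨i, h⟩ else 0) := by rw [h1]
    _ = ∑ i ∈ Finset.range n,
          (if k ≤ i then (if h : i < n then c ⟨i, h⟩ else 0) else 0) :=
        (Finset.sum_filter _ _)
    _ = ∑ i : Fin n, (if k ≤ (i : ℕ) then (if h : (i:ℕ) < n then c ⟨(i:ℕ), h⟩ else 0) else 0) :=
        (Fin.sum_univ_eq_sum_range (fun i => if k ≤ i then (if h : i < n then c ⟨i, h⟩ else 0) else 0) n).symm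
    _ = ∑ i : Fin n, (if k ≤ (i : ℕ) then c i else 0) := by
        apply Finset.sum_congr rfl
        intro i _
        by_cases hk : k ≤ (i : ℕ) <;> simp [hk, i.isLt]
    _ = ∑ i ∈ Finset.univ.filter (fun i : Fin n => k ≤ (i : ℕ)), c i :=
        (Finset.sum_filter _ _).symm

lemma hlp_majorize {n : ℕ} (f : ℝ → ℝ) (hconv : ConvexOn ℝ (Ioi (0:ℝ)) f)
    (hdiff : ∀ x : ℝ, 0 < x → DifferentiableAt ℝ f x)
    (a b : Fin n → ℝ) (ha : ∀ i, 0 < a i) (hb : ∀ i, 0 < b i)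
    (hmaj : Majorizes a b) : ∑ i, f (b i) ≤ ∑ i, f (a i) := by
  classical
  set σ := Tuple.sort a with hσ
  set τ := Tuple.sort b with hτ
  set A : ℕ → ℝ := fun i => if h : i < n then (a ∘ σ) ⟨i, h⟩ else 0 with hAdef
  set B : ℕ → ℝ := fun i => if h : i < n then (b ∘ τ) ⟨i, h⟩ else 0 with hBdef
  have hAv : ∀ (i : Fin n), A (i : ℕ) = a (σ i) := by
    intro i; simp [hAdef, i.isLt]
  have hBv : ∀ (i : Fin n), B (i : ℕ) = b (τ i) := by
    intro i; simp [hBdef, i.isLt]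
  have hApos : ∀ i, i < n → 0 < A i := by
    intro i hi
    have := hAv ⟨i, hi⟩
    simp only [Fin.val_mk] at this
    rw [this]; exact ha _
  have hBpos : ∀ i, i < n → 0 < B i := by
    intro i hi
    have := hBv ⟨i, hi⟩
    simp only [Fin.val_mk] at this
    rw [this]; exact hb _
  have hBmono : ∀ i j, i ≤ j → j < n → B i ≤ B j := by
    intro i j hij hj
    have hi : i < n := lt_of_le_of_lt hij hj
    have := Tuple.monotone_sort b (show (⟨i, hi⟩ : Fin n) ≤ ⟨j, hj⟩ from hij)
    rw [← hτ] at this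
    have e1 := hBv ⟨i, hi⟩
    have e2 := hBv ⟨j, hj⟩
    simp only [Fin.val_mk] at e1 e2
    rw [e1, e2]; exact this
  have hsumA : ∑ i ∈ Finset.range n, A i = ∑ i, a i := by
    rw [← Fin.sum_univ_eq_sum_range A n]
    rw [Finset.sum_congr rfl (fun i _ => hAv i)]
    exact Equiv.sum_comp σ a
  have hsumB : ∑ i ∈ Finset.range n, B i = ∑ i, b i := by
    rw [← Fin.sum_univ_eq_sum_range B n]
    rw [Finset.sum_congr rfl (fun i _ => hBv i)]
    exact Equiv.sum_comp τ b
  have htop : ∀ k, k ≤ n →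
      ∑ i ∈ Finset.Ico k n, B i ≤ ∑ i ∈ Finset.Ico k n, A i := by
    intro k hk
    have hBtop : ∑ i ∈ Finset.Ico k n, B i
        = ∑ i ∈ (Finset.univ.filter (fun i : Fin n => k ≤ (i : ℕ))).image τ, b i := by
      rw [Finset.sum_image (fun x _ y _ h => τ.injective h)]
      exact sum_Ico_dite (b ∘ τ) k
    obtain ⟨t, htcard, hts⟩ :=
      hmaj.1 ((Finset.univ.filter (fun i : Fin n => k ≤ (i : ℕ))).image τ)
    have hcardS : ((Finset.univ.filter (fun i : Fin n => k ≤ (i : ℕ))).image τ).card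
        = n - k := by
      rw [Finset.card_image_of_injective _ τ.injective, card_filter_ge n k hk]
    have h2 : ∑ i ∈ t, a i ≤ ∑ i ∈ Finset.Ico k n, A i := by
      have himg : ∑ i ∈ t.image σ.symm, (a ∘ σ) i = ∑ i ∈ t, a i := by
        rw [Finset.sum_image (fun x _ y _ h => σ.symm.injective h)]
        apply Finset.sum_congr rfl
        intro i _
        simp
      have hcard' : (t.image σ.symm).card = n - k := by
        rw [Finset.card_image_of_injective _ σ.symm.injective, htcard, hcardS]
      have hle := sum_le_sum_top (a ∘ σ) (Tuple.monotone_sort a) (t.image σ.symm)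
      rw [hcard', Nat.sub_sub_self hk] at hle
      rw [← himg]
      exact hle.trans_eq (sum_Ico_dite (a ∘ σ) k).symm
    rw [hBtop]
    exact hts.trans h2
  set c : ℕ → ℝ := fun i => deriv f (B i) with hcdef
  set d : ℕ → ℝ := fun i => A i - B i with hddef
  have hpartial : ∀ k, k ≤ n → ∑ i ∈ Finset.range k, d i ≤ 0 := by
    intro k hk
    have hsplitA : ∑ i ∈ Finset.range k, A i + ∑ i ∈ Finset.Ico k n, A i
        = ∑ i ∈ Finset.range n, A i := by
      rw [Finset.range_eq_Ico, Finset.range_eq_Ico]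
      exact Finset.sum_Ico_consecutive A (Nat.zero_le k) hk
    have hsplitB : ∑ i ∈ Finset.range k, B i + ∑ i ∈ Finset.Ico k n, B i
        = ∑ i ∈ Finset.range n, B i := by
      rw [Finset.range_eq_Ico, Finset.range_eq_Ico]
      exact Finset.sum_Ico_consecutive B (Nat.zero_le k) hk
    have htopk := htop k hk
    have htot : ∑ i ∈ Finset.range n, A i = ∑ i ∈ Finset.range n, B i := by
      rw [hsumA, hsumB, hmaj.2]
    have : ∑ i ∈ Finset.range k, d i
        = ∑ i ∈ Finset.range k, A i - ∑ i ∈ Finset.range k, B i := by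
      rw [hddef]; exact Finset.sum_sub_distrib _ _
    rw [this]
    linarith
  have htotal : ∑ i ∈ Finset.range n, d i = 0 := by
    have : ∑ i ∈ Finset.range n, d i
        = ∑ i ∈ Finset.range n, A i - ∑ i ∈ Finset.range n, B i := by
      rw [hddef]; exact Finset.sum_sub_distrib _ _
    rw [this, hsumA, hsumB, hmaj.2, sub_self]
  have hcmono : ∀ i, i + 1 < n → c i ≤ c (i + 1) := by
    intro i hi
    have h1 : B i ∈ Ioi (0:ℝ) := hBpos i (by omega)
    have h2 : B (i + 1) ∈ Ioi (0:ℝ) := hBpos (i + 1) hi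
    exact hconv.monotoneOn_deriv (fun x hx => hdiff x hx) h1 h2
      (hBmono i (i + 1) (by omega) hi)
  have habel := abel_nonneg n c d hcmono hpartial htotal
  have hterm : ∀ i ∈ Finset.range n, c i * d i ≤ f (A i) - f (B i) := by
    intro i hi
    rw [Finset.mem_range] at hi
    have := tangent_line_le hconv (hBpos i hi) (hApos i hi) (hdiff _ (hBpos i hi))
    simp only [hcdef, hddef]
    linarith
  have hmain : 0 ≤ ∑ i ∈ Finset.range n, (f (A i) - f (B i)) :=
    habel.trans (Finset.sum_le_sum hterm)
  have hfa : ∑ i ∈ Finset.range n, f (A i) = ∑ i, f (a i) := by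
    rw [← Fin.sum_univ_eq_sum_range (fun i => f (A i)) n]
    rw [Finset.sum_congr rfl (fun i _ => by rw [hAv i])]
    exact Equiv.sum_comp σ (fun i => f (a i))
  have hfb : ∑ i ∈ Finset.range n, f (B i) = ∑ i, f (b i) := by
    rw [← Fin.sum_univ_eq_sum_range (fun i => f (B i)) n]
    rw [Finset.sum_congr rfl (fun i _ => by rw [hBv i])]
    exact Equiv.sum_comp τ (fun i => f (b i))
  have := Finset.sum_sub_distrib (s := Finset.range n)
    (f := fun i => f (A i)) (g := fun i => f (B i))
  rw [this, hfa, hfb] at hmain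
  linarith

section Gfun

variable {u : ℝ}


lemma gconv_s12 (hu0 : 0 < u) (hu1 : u < 1)
    (hFb : ConvexOn ℝ (Ioi (0:ℝ)) Fb) :
    ConvexOn ℝ (Ioi (0:ℝ))
      (fun a => (1 / (u * (-Real.log u))) * Fb ((-Real.log u) * a)) := by
  have hlog : Real.log u < 0 := Real.log_neg hu0 hu1
  have hc2 : 0 < -Real.log u := by linarith
  have hc1 : 0 ≤ 1 / (u * (-Real.log u)) := by positivity
  refine ⟨convex_Ioi 0, ?_⟩
  intro p hp q hq μ ν hμ hν hμν
  have hp' : (-Real.log u) * p ∈ Ioi (0:ℝ) := mul_pos hc2 hp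
  have hq' : (-Real.log u) * q ∈ Ioi (0:ℝ) := mul_pos hc2 hq
  have h := hFb.2 hp' hq' hμ hν hμν
  simp only [smul_eq_mul] at h ⊢
  have harg : (-Real.log u) * (μ * p + ν * q)
      = μ * ((-Real.log u) * p) + ν * ((-Real.log u) * q) := by ring
  rw [harg]
  calc (1 / (u * (-Real.log u))) * Fb (μ * ((-Real.log u) * p) + ν * ((-Real.log u) * q))
      ≤ (1 / (u * (-Real.log u))) * (μ * Fb ((-Real.log u) * p) + ν * Fb ((-Real.log u) * q)) :=
        mul_le_mul_of_nonneg_left h hc1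
    _ = μ * ((1 / (u * (-Real.log u))) * Fb ((-Real.log u) * p))
        + ν * ((1 / (u * (-Real.log u))) * Fb ((-Real.log u) * q)) := by ring

lemma geq (hu0 : 0 < u) (hu1 : u < 1) {a : ℝ} (ha : 0 < a) :
    (1 / (u * (-Real.log u))) * Fb ((-Real.log u) * a)
      = a * u ^ (a - 1) / (1 - u ^ a) := by
  have hlog : Real.log u < 0 := Real.log_neg hu0 hu1
  have hua_pos : 0 < u ^ a := Real.rpow_pos_of_pos hu0 a
  have hua_lt : u ^ a < 1 := Real.rpow_lt_one hu0.le hu1 ha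
  have hne : 1 - u ^ a ≠ 0 := ne_of_gt (by linarith)
  have hexp : Real.exp ((-Real.log u) * a) = (u ^ a)⁻¹ := by
    rw [← Real.rpow_neg hu0.le, Real.rpow_def_of_pos hu0]
    ring_nf
  have hinv : (u ^ a)⁻¹ - 1 ≠ 0 := by
    have key : u ^ a * ((u ^ a)⁻¹ - 1) = 1 - u ^ a := by
      field_simp
    intro hcon
    rw [hcon, mul_zero] at key
    exact hne key.symm
  have h2 : (u ^ a)⁻¹ - 1 = (1 - u ^ a) / (u ^ a) := by
    field_simp
  rw [Fb, hexp, Real.rpow_sub hu0, Real.rpow_one, h2, div_div_eq_mul_div]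
  field_simp [hne, hu0.ne', hlog.ne]

end Gfun


theorem max_reversed_failure_rate_order (n : ℕ) (θ φ : ℝ) (hθ : 0 < θ) (hφ : 0 < φ)
    (α α' : Fin n → ℝ) (hα : ∀ i, 0 < α i) (hα' : ∀ i, 0 < α' i)
    (hmaj : Majorizes α α') :
    ∀ x : ℝ, 0 < x →
      θ * φ * x ^ (-φ - 1) * Real.exp (-θ * x ^ (-φ)) *
          ∑ i, α' i * (1 - Real.exp (-θ * x ^ (-φ))) ^ (α' i - 1) /
            (1 - (1 - Real.exp (-θ * x ^ (-φ))) ^ (α' i)) ≤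
        θ * φ * x ^ (-φ - 1) * Real.exp (-θ * x ^ (-φ)) *
          ∑ i, α i * (1 - Real.exp (-θ * x ^ (-φ))) ^ (α i - 1) /
            (1 - (1 - Real.exp (-θ * x ^ (-φ))) ^ (α i)) := by
  intro x hx
  have hxpow : 0 < x ^ (-φ) := Real.rpow_pos_of_pos hx _
  have hE0 : 0 < Real.exp (-θ * x ^ (-φ)) := Real.exp_pos _
  have hE1 : Real.exp (-θ * x ^ (-φ)) < 1 := by
    rw [Real.exp_lt_one_iff]
    nlinarith
  set u : ℝ := 1 - Real.exp (-θ * x ^ (-φ)) with hu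
  have hu0 : 0 < u := by rw [hu]; linarith
  have hu1 : u < 1 := by rw [hu]; linarith
  have hconv := gconv_s12 hu0 hu1 convexOn_Fb
  have hdiff : ∀ y : ℝ, 0 < y →
      DifferentiableAt ℝ (fun a => (1 / (u * (-Real.log u))) * Fb ((-Real.log u) * a)) y := by
    intro y hy
    have hlog : Real.log u < 0 := Real.log_neg hu0 hu1
    have hc2 : 0 < -Real.log u := by linarith
    have h1 : HasDerivAt (fun a : ℝ => (-Real.log u) * a) (-Real.log u) y := by
      simpa using (hasDerivAt_id y).const_mul (-Real.log u)
    have h2 := (hasDerivAt_Fb (mul_pos hc2 hy)).comp y h1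
    exact (h2.const_mul (1 / (u * (-Real.log u)))).differentiableAt
  have hkey := hlp_majorize _ hconv hdiff α α' hα hα' hmaj
  have hrw : ∀ (β : Fin n → ℝ), (∀ i, 0 < β i) →
      ∑ i, β i * u ^ (β i - 1) / (1 - u ^ (β i))
        = ∑ i, (fun a => (1 / (u * (-Real.log u))) * Fb ((-Real.log u) * a)) (β i) := by
    intro β hβ
    exact Finset.sum_congr rfl fun i _ => (geq hu0 hu1 (hβ i)).symm
  have hC : 0 ≤ θ * φ * x ^ (-φ - 1) * Real.exp (-θ * x ^ (-φ)) := by positivity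
  apply mul_le_mul_of_nonneg_left _ hC
  rw [hrw α' hα', hrw α hα]
  exact hkey
end

section
/- Let a = Σᵢ₌₁ⁿ αᵢ and a* = Σᵢ₌₁ⁿ αᵢ* with 0 < a ≤ a*. Then for fixed θ, φ > 0, the ratio r(x) = (a/a*)·(1-e^(-θx^(-φ)))^(a-a*) is non-decreasing in x on (0, ∞). Consequently, if X₁:ₙ and X*₁:ₙ are the minima of independent EG₂(θ, φ, αᵢ) and EG₂(θ, φ, αᵢ*) samples respectively, then X*₁:ₙ ≤_lr X₁:ₙ. -/
theorem min_lr_order (n : ℕ) (θ φ : ℝ) (hθ : 0 < θ) (hφ : 0 < φ)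
    (α α' : Fin n → ℝ) (a a' : ℝ) (ha : a = ∑ i, α i) (ha' : a' = ∑ i, α' i)
    (ha0 : 0 < a) (haa : a ≤ a') :
    MonotoneOn (fun x : ℝ => a / a' * (1 - Real.exp (-θ * x ^ (-φ))) ^ (a - a'))
        (Set.Ioi (0 : ℝ)) ∧
      MonotoneOn (fun x : ℝ =>
          (θ * φ * x ^ (-φ - 1) * Real.exp (-θ * x ^ (-φ)) * a *
              (1 - Real.exp (-θ * x ^ (-φ))) ^ (a - 1)) /
            (θ * φ * x ^ (-φ - 1) * Real.exp (-θ * x ^ (-φ)) * a' *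
              (1 - Real.exp (-θ * x ^ (-φ))) ^ (a' - 1)))
        (Set.Ioi (0 : ℝ)) := by
  have ha'0 : 0 < a' := lt_of_lt_of_le ha0 haa
  -- positivity of the base
  have hgpos : ∀ x : ℝ, 0 < x → 0 < 1 - Real.exp (-θ * x ^ (-φ)) := by
    intro x hx
    have hxp : 0 < x ^ (-φ) := Real.rpow_pos_of_pos hx _
    have : -θ * x ^ (-φ) < 0 := mul_neg_of_neg_of_pos (neg_neg_of_pos hθ) hxp
    have := Real.exp_lt_one_iff.mpr this
    linarith
  -- antitonicity of the base
  have hganti : ∀ x ∈ Set.Ioi (0:ℝ), ∀ y ∈ Set.Ioi (0:ℝ), x ≤ y →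
      1 - Real.exp (-θ * y ^ (-φ)) ≤ 1 - Real.exp (-θ * x ^ (-φ)) := by
    intro x hx y hy hxy
    have h1 : y ^ (-φ) ≤ x ^ (-φ) :=
      Real.rpow_le_rpow_of_nonpos hx hxy (neg_nonpos.mpr hφ.le)
    have h2 : -θ * x ^ (-φ) ≤ -θ * y ^ (-φ) := by nlinarith
    have := Real.exp_le_exp.mpr h2
    linarith
  have h1 : MonotoneOn (fun x : ℝ => a / a' * (1 - Real.exp (-θ * x ^ (-φ))) ^ (a - a'))
      (Set.Ioi (0 : ℝ)) := by
    intro x hx y hy hxy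
    have hgy : 0 < 1 - Real.exp (-θ * y ^ (-φ)) := hgpos y hy
    have hle := hganti x hx y hy hxy
    have hrp : (1 - Real.exp (-θ * x ^ (-φ))) ^ (a - a')
        ≤ (1 - Real.exp (-θ * y ^ (-φ))) ^ (a - a') :=
      Real.rpow_le_rpow_of_nonpos hgy hle (by linarith)
    exact mul_le_mul_of_nonneg_left hrp (div_nonneg ha0.le ha'0.le)
  refine ⟨h1, h1.congr ?_⟩
  intro x hx
  have hx0 : (0:ℝ) < x := hx
  have hg : 0 < 1 - Real.exp (-θ * x ^ (-φ)) := hgpos x hx0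
  have hC : θ * φ * x ^ (-φ - 1) * Real.exp (-θ * x ^ (-φ)) ≠ 0 := by
    have hxp : 0 < x ^ (-φ - 1) := Real.rpow_pos_of_pos hx0 _
    positivity
  set g := 1 - Real.exp (-θ * x ^ (-φ)) with hgdef
  have hsub : g ^ (a - a') = g ^ (a - 1) / g ^ (a' - 1) := by
    rw [← Real.rpow_sub hg]; ring_nf
  simp only
  rw [mul_div_mul_comm, mul_div_mul_comm, div_self hC, one_mul, hsub]
end

section
/- For fixed x > 0, θ > 0, α > 0, the function (φ₁,...,φₙ) ↦ ∏ᵢ(1-e^(-θx^(-φᵢ)))^α is Schur-concave on (0,∞)ⁿ. Consequently, if (φ₁,...,φₙ) majorizes (φ₁*,...,φₙ*), then ∏ᵢ(1-e^(-θx^(-φᵢ)))^α ≤ ∏ᵢ(1-e^(-θx^(-φᵢ*)))^α; i.e., the minimum of independent EG₂(θ, φᵢ, α) variables is smaller in the usual stochastic order than the minimum of independent EG₂(θ, φᵢ*, α) variables. -/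
lemma psi_antitone {u v : ℝ} (hu : 0 < u) (huv : u ≤ v) :
    v * Real.exp (-v) / (1 - Real.exp (-v)) ≤ u * Real.exp (-u) / (1 - Real.exp (-u)) := by
  have hv : 0 < v := lt_of_lt_of_le hu huv
  have h1u : Real.exp (-u) < 1 := by rw [Real.exp_lt_one_iff]; linarith
  have h1v : Real.exp (-v) < 1 := by rw [Real.exp_lt_one_iff]; linarith
  have key : v * (Real.exp u - 1) ≤ u * (Real.exp v - 1) := by
    have hta : (0:ℝ) ≤ 1 - u / v := by
      have : u / v ≤ 1 := (div_le_one hv).2 huv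
      linarith
    have htb : (0:ℝ) ≤ u / v := by positivity
    have ht := convexOn_exp.2 (Set.mem_univ (0:ℝ)) (Set.mem_univ v) hta htb (by ring)
    simp only [smul_eq_mul, mul_zero, zero_add, Real.exp_zero, mul_one] at ht
    rw [div_mul_cancel₀ u hv.ne'] at ht
    have h2 := mul_le_mul_of_nonneg_left ht hv.le
    have e1 : v * (1 - u / v + u / v * Real.exp v) = v - u + u * Real.exp v := by
      field_simp
    linarith [e1 ▸ h2]
  rw [div_le_div_iff₀ (by linarith) (by linarith)]
  have hEu : (0:ℝ) < Real.exp u := Real.exp_pos u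
  have hEv : (0:ℝ) < Real.exp v := Real.exp_pos v
  rw [Real.exp_neg u, Real.exp_neg v]
  have h3 := mul_le_mul_of_nonneg_right key
    (by positivity : (0:ℝ) ≤ (Real.exp u)⁻¹ * (Real.exp v)⁻¹)
  have hEu1 : Real.exp u * (Real.exp u)⁻¹ = 1 := mul_inv_cancel₀ hEu.ne'
  have hEv1 : Real.exp v * (Real.exp v)⁻¹ = 1 := mul_inv_cancel₀ hEv.ne'
  have e2 : v * (Real.exp u - 1) * ((Real.exp u)⁻¹ * (Real.exp v)⁻¹)
      = v * (Real.exp v)⁻¹ * (1 - (Real.exp u)⁻¹) := by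
    linear_combination v * (Real.exp v)⁻¹ * hEu1
  have e3 : u * (Real.exp v - 1) * ((Real.exp u)⁻¹ * (Real.exp v)⁻¹)
      = u * (Real.exp u)⁻¹ * (1 - (Real.exp v)⁻¹) := by
    linear_combination u * (Real.exp u)⁻¹ * hEv1
  linarith [h3, e2, e3]


lemma one_sub_exp_pos {t : ℝ} (ht : 0 < t) : 0 < 1 - Real.exp (-t) := by
  have : Real.exp (-t) < 1 := by rw [Real.exp_lt_one_iff]; linarith
  linarith

lemma F_hasDeriv (θ α L : ℝ) (hθ : 0 < θ) (p : ℝ) :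
    HasDerivAt (fun q : ℝ => Real.log (1 - Real.exp (-θ * Real.exp (L * -q))) * α)
      (-(α * L) * (θ * Real.exp (L * -p) * Real.exp (-θ * Real.exp (L * -p)) /
        (1 - Real.exp (-θ * Real.exp (L * -p))))) p := by
  have hw : 0 < θ * Real.exp (L * -p) := by positivity
  have hne : 1 - Real.exp (-θ * Real.exp (L * -p)) ≠ 0 := by
    rw [neg_mul]
    exact (one_sub_exp_pos hw).ne'
  have h1 : HasDerivAt (fun q : ℝ => L * -q) (-L) p := by
    simpa using (hasDerivAt_id p).neg.const_mul L
  have h2 := h1.exp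
  have h3 := h2.const_mul (-θ)
  have h4 : HasDerivAt (fun q : ℝ => -θ * Real.exp (L * -q))
      (-θ * (Real.exp (L * -p) * -L)) p := h3
  have h5 := h4.exp
  have h6 := h5.const_sub 1
  have h7 := h6.log hne
  have h8 := h7.mul_const α
  refine h8.congr_deriv ?_
  ring

lemma F'_antitone (θ α L : ℝ) (hθ : 0 < θ) (hα : 0 < α) :
    Antitone (fun p : ℝ => -(α * L) * (θ * Real.exp (L * -p) * Real.exp (-θ * Real.exp (L * -p)) /
        (1 - Real.exp (-θ * Real.exp (L * -p))))) := by
  intro p q hpq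
  simp only [neg_mul]
  set wp := θ * Real.exp (L * -p) with hwp
  set wq := θ * Real.exp (L * -q) with hwq
  have hwpp : 0 < wp := by positivity
  have hwqp : 0 < wq := by positivity
  rcases le_total L 0 with hL | hL
  · have hw : wp ≤ wq := by
      have : L * -p ≤ L * -q := by nlinarith
      have := Real.exp_le_exp.2 this
      rw [hwp, hwq]
      nlinarith
    have hpsi := psi_antitone hwpp hw
    have hc : (0:ℝ) ≤ -(α * L) := by nlinarith
    have := mul_le_mul_of_nonneg_left hpsi hc
    simpa [neg_mul] using this
  · have hw : wq ≤ wp := by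
      have : L * -q ≤ L * -p := by nlinarith
      have := Real.exp_le_exp.2 this
      rw [hwp, hwq]
      nlinarith
    have hpsi := psi_antitone hwqp hw
    have hc : -(α * L) ≤ 0 := by nlinarith
    have := mul_le_mul_of_nonpos_left hpsi hc
    simpa [neg_mul] using this

lemma tangent_le {g g' : ℝ → ℝ} (hd : ∀ y, HasDerivAt g (g' y) y) (hanti : Antitone g')
    (b y : ℝ) : g y ≤ g b + g' b * (y - b) := by
  rcases lt_trichotomy y b with h | h | h
  · obtain ⟨c, hc, hceq⟩ := exists_hasDerivAt_eq_slope g g' h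
      (fun x _ => (hd x).continuousAt.continuousWithinAt) (fun x _ => hd x)
    have h1 : g' b ≤ g' c := hanti hc.2.le
    have h2 : g' b ≤ (g b - g y) / (b - y) := by rw [← hceq]; exact h1
    rw [le_div_iff₀ (by linarith)] at h2
    nlinarith
  · subst h; simp
  · obtain ⟨c, hc, hceq⟩ := exists_hasDerivAt_eq_slope g g' h
      (fun x _ => (hd x).continuousAt.continuousWithinAt) (fun x _ => hd x)
    have h1 : g' c ≤ g' b := hanti hc.1.le
    have h2 : (g y - g b) / (y - b) ≤ g' b := by rw [← hceq]; exact h1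
    rw [div_le_iff₀ (by linarith)] at h2
    nlinarith

lemma abel_aux (c e : ℕ → ℝ) :
    ∀ n : ℕ, (∀ i j, i ≤ j → j < n → c i ≤ c j) →
      (∀ k, k ≤ n → 0 ≤ ∑ i ∈ Finset.range k, e i) →
      ∑ i ∈ Finset.range n, c i * e i ≤ c (n - 1) * ∑ i ∈ Finset.range n, e i := by
  intro n
  induction n with
  | zero => intro _ _; simp
  | succ m ih =>
    intro hc hE
    have h1 := ih (fun i j hij hj => hc i j hij (by omega)) (fun k hk => hE k (by omega))
    rw [Finset.sum_range_succ, Finset.sum_range_succ]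
    have h2 : c (m - 1) * ∑ i ∈ Finset.range m, e i ≤ c m * ∑ i ∈ Finset.range m, e i := by
      apply mul_le_mul_of_nonneg_right (hc (m - 1) m (by omega) (by omega)) (hE m (by omega))
    have : m + 1 - 1 = m := by omega
    rw [this, mul_add]
    linarith

lemma abel_nonpos (n : ℕ) (c e : ℕ → ℝ)
    (hc : ∀ i j, i ≤ j → j < n → c i ≤ c j)
    (hE : ∀ k, k ≤ n → 0 ≤ ∑ i ∈ Finset.range k, e i)
    (hEn : ∑ i ∈ Finset.range n, e i = 0) :
    ∑ i ∈ Finset.range n, c i * e i ≤ 0 := by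
  have := abel_aux c e n hc hE
  rw [hEn, mul_zero] at this
  exact this

lemma strictMono_fin_le {k n : ℕ} (f : Fin k → Fin n) (hf : StrictMono f) (i : Fin k) :
    (i : ℕ) ≤ (f i : ℕ) := by
  have hkn : k ≤ n := by
    by_contra h
    push_neg at h
    exact absurd (Fintype.card_le_of_injective f hf.injective) (by simpa using h)
  set g : ℕ → ℕ := fun m => if h : m < k then (f ⟨m, h⟩ : ℕ) else m + n with hg
  have hgm : StrictMono g := by
    intro p q hpq
    rcases lt_or_ge p k with hp | hp <;> rcases lt_or_ge q k with hq | hq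
    · simp only [hg, dif_pos hp, dif_pos hq]
      exact hf (Fin.mk_lt_mk.2 hpq)
    · simp only [hg, dif_pos hp, dif_neg (not_lt.2 hq)]
      exact lt_of_lt_of_le (f ⟨p, hp⟩).2 (by omega)
    · omega
    · simp only [hg, dif_neg (not_lt.2 hp), dif_neg (not_lt.2 hq)]
      omega
  have := hgm.le_apply (x := (i : ℕ))
  simpa [hg, i.2] using this

lemma sum_le_sorted {n : ℕ} (a : Fin n → ℝ) (ha : Antitone a) {k : ℕ} (hk : k ≤ n)
    (u : Finset (Fin n)) (hu : u.card = k) :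
    ∑ j ∈ u, a j ≤ ∑ i : Fin k, a (Fin.castLE hk i) := by
  have hemb := u.orderEmbOfFin hu
  have humap : u = Finset.univ.map (u.orderEmbOfFin hu).toEmbedding := by
    apply Finset.eq_of_subset_of_card_le
    · intro j hj
      rw [Finset.mem_map]
      have : j ∈ Set.range (u.orderEmbOfFin hu) := by
        rw [Finset.range_orderEmbOfFin]; exact hj
      obtain ⟨i, hi⟩ := this
      exact ⟨i, Finset.mem_univ i, hi⟩
    · simp [hu]
  rw [humap, Finset.sum_map]
  apply Finset.sum_le_sum
  intro i _
  apply ha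
  have := strictMono_fin_le (u.orderEmbOfFin hu) (u.orderEmbOfFin hu).strictMono i
  exact Fin.mk_le_of_le_val this

lemma schur_sum (n : ℕ) (θ α L : ℝ) (hθ : 0 < θ) (hα : 0 < α)
    (φ φ' : Fin n → ℝ) (hmaj : Majorizes φ φ') :
    ∑ i, Real.log (1 - Real.exp (-θ * Real.exp (L * -(φ i)))) * α ≤
      ∑ i, Real.log (1 - Real.exp (-θ * Real.exp (L * -(φ' i)))) * α := by
  rcases Nat.eq_zero_or_pos n with hn | hn
  · subst hn; simp
  set F : ℝ → ℝ := fun q => Real.log (1 - Real.exp (-θ * Real.exp (L * -q))) * α with hF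
  set F' : ℝ → ℝ := fun p => -(α * L) * (θ * Real.exp (L * -p) *
      Real.exp (-θ * Real.exp (L * -p)) / (1 - Real.exp (-θ * Real.exp (L * -p)))) with hF'
  have hd : ∀ p, HasDerivAt F (F' p) p := fun p => F_hasDeriv θ α L hθ p
  have hanti : Antitone F' := F'_antitone θ α L hθ hα
  set σ := Tuple.sort (fun i => -φ i) with hσ
  set τ := Tuple.sort (fun i => -φ' i) with hτ
  set a : Fin n → ℝ := fun i => φ (σ i) with ha
  set b : Fin n → ℝ := fun i => φ' (τ i) with hb
  have haanti : Antitone a := by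
    intro i j hij
    have := Tuple.monotone_sort (fun i => -φ i) hij
    simp only [Function.comp_apply] at this
    simp only [ha]
    linarith
  have hbanti : Antitone b := by
    intro i j hij
    have := Tuple.monotone_sort (fun i => -φ' i) hij
    simp only [Function.comp_apply] at this
    simp only [hb]
    linarith
  -- partial sums inequality
  have hpartial : ∀ k : ℕ, (hk : k ≤ n) →
      ∑ i : Fin k, b (Fin.castLE hk i) ≤ ∑ i : Fin k, a (Fin.castLE hk i) := by
    intro k hk
    have hinj : Function.Injective (fun i : Fin k => τ (Fin.castLE hk i)) :=
      τ.injective.comp (Fin.castLE_injective hk)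
    set s₀ : Finset (Fin n) := Finset.image (fun i : Fin k => τ (Fin.castLE hk i)) Finset.univ
      with hs₀
    have hs₀card : s₀.card = k := by
      rw [hs₀, Finset.card_image_of_injective _ hinj, Finset.card_univ, Fintype.card_fin]
    have hs₀sum : ∑ j ∈ s₀, φ' j = ∑ i : Fin k, b (Fin.castLE hk i) := by
      rw [hs₀, Finset.sum_image (fun i _ j _ h => hinj h)]
    obtain ⟨t, htc, hts⟩ := hmaj.1 s₀
    have htcard : t.card = k := by rw [htc, hs₀card]
    have hmap : ∑ j ∈ t, φ j = ∑ j ∈ t.image σ.symm, a j := by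
      rw [Finset.sum_image (fun i _ j _ h => σ.symm.injective h)]
      apply Finset.sum_congr rfl
      intro j _
      simp [ha]
    have himgcard : (t.image σ.symm).card = k := by
      rw [Finset.card_image_of_injective _ σ.symm.injective, htcard]
    calc ∑ i : Fin k, b (Fin.castLE hk i) = ∑ j ∈ s₀, φ' j := hs₀sum.symm
      _ ≤ ∑ j ∈ t, φ j := hts
      _ = ∑ j ∈ t.image σ.symm, a j := hmap
      _ ≤ ∑ i : Fin k, a (Fin.castLE hk i) := sum_le_sorted a haanti hk _ himgcard
  -- Abel step
  have habel : ∑ i, F' (b i) * (a i - b i) ≤ 0 := by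
    set cN : ℕ → ℝ := fun m => F' (b ⟨min m (n - 1), by omega⟩) with hcN
    set eN : ℕ → ℝ := fun m => if h : m < n then a ⟨m, h⟩ - b ⟨m, h⟩ else 0 with heN
    have h1 : ∑ i, F' (b i) * (a i - b i) = ∑ m ∈ Finset.range n, cN m * eN m := by
      rw [← Fin.sum_univ_eq_sum_range (fun m => cN m * eN m) n]
      apply Finset.sum_congr rfl
      intro i _
      have hi : (i : ℕ) < n := i.2
      have hmin : (⟨min (i : ℕ) (n - 1), by omega⟩ : Fin n) = i := by
        ext; simp; omega
      simp only [hcN, heN, dif_pos hi, hmin]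
    rw [h1]
    apply abel_nonpos n cN eN
    · intro i j hij hj
      exact hanti (hbanti (Fin.mk_le_mk.2 (by omega)))
    · intro k hk
      have h2 : ∑ m ∈ Finset.range k, eN m =
          ∑ i : Fin k, (a (Fin.castLE hk i) - b (Fin.castLE hk i)) := by
        rw [← Fin.sum_univ_eq_sum_range (fun m => eN m) k]
        apply Finset.sum_congr rfl
        intro i _
        have hi : (i : ℕ) < n := lt_of_lt_of_le i.2 hk
        simp only [heN, dif_pos hi]
        rfl
      rw [h2, Finset.sum_sub_distrib, sub_nonneg]
      exact hpartial k hk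
    · rw [← Fin.sum_univ_eq_sum_range (fun m => eN m) n]
      have : ∀ i : Fin n, eN i = a i - b i := by
        intro i
        simp only [heN, dif_pos i.2]
      rw [Finset.sum_congr rfl (fun i _ => this i), Finset.sum_sub_distrib]
      have e1 : ∑ i, a i = ∑ i, φ i := Equiv.sum_comp σ φ
      have e2 : ∑ i, b i = ∑ i, φ' i := Equiv.sum_comp τ φ'
      rw [e1, e2, hmaj.2, sub_self]
  -- main chain
  have key : ∑ i, F (a i) ≤ ∑ i, F (b i) := by
    have tangent : ∀ i : Fin n, F (a i) ≤ F (b i) + F' (b i) * (a i - b i) :=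
      fun i => tangent_le hd hanti _ _
    calc ∑ i, F (a i) ≤ ∑ i, (F (b i) + F' (b i) * (a i - b i)) :=
          Finset.sum_le_sum (fun i _ => tangent i)
      _ = ∑ i, F (b i) + ∑ i, F' (b i) * (a i - b i) := Finset.sum_add_distrib
      _ ≤ ∑ i, F (b i) := by linarith
  have e1 : ∑ i, F (a i) = ∑ i, F (φ i) := Equiv.sum_comp σ (fun i => F (φ i))
  have e2 : ∑ i, F (b i) = ∑ i, F (φ' i) := Equiv.sum_comp τ (fun i => F (φ' i))
  calc ∑ i, F (φ i) = ∑ i, F (a i) := e1.symm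
    _ ≤ ∑ i, F (b i) := key
    _ = ∑ i, F (φ' i) := e2

theorem min_st_order_inner_shape (n : ℕ) (θ α : ℝ) (hθ : 0 < θ) (hα : 0 < α)
    (φ φ' : Fin n → ℝ) (hφ : ∀ i, 0 < φ i) (hφ' : ∀ i, 0 < φ' i)
    (hmaj : Majorizes φ φ') :
    ∀ x : ℝ, 0 < x →
      ∏ i, (1 - Real.exp (-θ * x ^ (-(φ i)))) ^ α ≤
        ∏ i, (1 - Real.exp (-θ * x ^ (-(φ' i)))) ^ α := by
  intro x hx
  set L := Real.log x with hL
  have hfac : ∀ p : ℝ, (1 - Real.exp (-θ * x ^ (-p))) ^ α =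
      Real.exp (Real.log (1 - Real.exp (-θ * Real.exp (L * -p))) * α) := by
    intro p
    have hxp : x ^ (-p) = Real.exp (L * -p) := Real.rpow_def_of_pos hx (-p)
    rw [hxp]
    have hpos : 0 < 1 - Real.exp (-θ * Real.exp (L * -p)) := by
      have hw : 0 < θ * Real.exp (L * -p) := by positivity
      rw [show -θ * Real.exp (L * -p) = -(θ * Real.exp (L * -p)) by ring]
      exact one_sub_exp_pos hw
    rw [Real.rpow_def_of_pos hpos]
  simp only [hfac]
  rw [← Real.exp_sum, ← Real.exp_sum]
  exact Real.exp_le_exp.2 (schur_sum n θ α L hθ hα φ φ' hmaj)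
end

section
/- Let η(α, u) = u^α log(u)/(1-u^α) for α > 0 and u ∈ (0,1), and let u(θ) = 1-e^(-θx^(-φ)) for fixed x, φ > 0. If α₁ ≥ α₂ > 0 and 0 < θ₁ ≤ θ₂, then η(α₂, u(θ₂)) ≤ η(α₁, u(θ₁)). -/
open Real

private lemma g_deriv {w : ℝ} (hw : w ∈ Set.Ioo (0:ℝ) 1) :
    HasDerivAt (fun w : ℝ => w * Real.log w / (1 - w))
      ((Real.log w + 1 - w) / (1 - w) ^ 2) w := by
  obtain ⟨hw0, hw1⟩ := hw
  have h1 : HasDerivAt (fun w : ℝ => w * Real.log w) (Real.log w + 1) w := by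
    have := (hasDerivAt_id w).mul (Real.hasDerivAt_log hw0.ne')
    refine this.congr_deriv ?_
    simp [hw0.ne']
  have h2 : HasDerivAt (fun w : ℝ => 1 - w) (-1) w := by
    simpa using (hasDerivAt_id w).const_sub (1:ℝ)
  have hne : (1 : ℝ) - w ≠ 0 := sub_ne_zero.2 (ne_of_gt hw1)
  have := h1.div h2 hne
  refine this.congr_deriv ?_
  ring

private lemma g_anti : StrictAntiOn (fun w : ℝ => w * Real.log w / (1 - w)) (Set.Ioo 0 1) := by
  apply strictAntiOn_of_deriv_neg (convex_Ioo 0 1)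
  · apply ContinuousOn.div
    · exact (continuousOn_id.mul (Real.continuousOn_log.mono (by
        intro w hw; exact ne_of_gt hw.1)))
    · exact (continuousOn_const.sub continuousOn_id)
    · intro w hw; exact sub_ne_zero.2 (ne_of_gt hw.2)
  · intro w hw
    rw [interior_Ioo] at hw
    rw [(g_deriv hw).deriv]
    apply div_neg_of_neg_of_pos
    · have := Real.log_lt_sub_one_of_pos hw.1 (ne_of_lt hw.2)
      linarith
    · exact pow_pos (sub_pos.2 hw.2) 2

/-- η is antitone in u for fixed exponent a > 0. -/
private lemma eta_u_anti {a u₁ u₂ : ℝ} (ha : 0 < a) (h0 : 0 < u₁) (h12 : u₁ ≤ u₂)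
    (h1 : u₂ < 1) :
    u₂ ^ a * Real.log u₂ / (1 - u₂ ^ a) ≤ u₁ ^ a * Real.log u₁ / (1 - u₁ ^ a) := by
  have h02 : 0 < u₂ := lt_of_lt_of_le h0 h12
  have hu1lt : u₁ < 1 := lt_of_le_of_lt h12 h1
  -- η a u = g (u^a) / a where g w = w log w / (1 - w)
  have key : ∀ u : ℝ, 0 < u → u < 1 →
      u ^ a * Real.log u / (1 - u ^ a) = (u ^ a * Real.log (u ^ a) / (1 - u ^ a)) / a := by
    intro u hu0 hu1
    rw [Real.log_rpow hu0]
    have hden : (1 : ℝ) - u ^ a ≠ 0 := by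
      have : u ^ a < 1 := Real.rpow_lt_one hu0.le hu1 ha
      exact sub_ne_zero.2 (ne_of_gt this)
    field_simp
  rw [key u₁ h0 hu1lt, key u₂ h02 h1]
  apply div_le_div_of_nonneg_right _ ha.le
  have hm1 : u₁ ^ a ∈ Set.Ioo (0:ℝ) 1 :=
    ⟨Real.rpow_pos_of_pos h0 a, Real.rpow_lt_one h0.le hu1lt ha⟩
  have hm2 : u₂ ^ a ∈ Set.Ioo (0:ℝ) 1 :=
    ⟨Real.rpow_pos_of_pos h02 a, Real.rpow_lt_one h02.le h1 ha⟩
  rcases eq_or_lt_of_le h12 with rfl | hlt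
  · exact le_refl _
  · exact (g_anti hm1 hm2 (Real.rpow_lt_rpow h0.le hlt ha)).le

/-- η is monotone in a for fixed u ∈ (0,1). -/
private lemma eta_a_mono {u a₁ a₂ : ℝ} (hu0 : 0 < u) (hu1 : u < 1) (ha₂ : 0 < a₂)
    (ha : a₂ ≤ a₁) :
    u ^ a₂ * Real.log u / (1 - u ^ a₂) ≤ u ^ a₁ * Real.log u / (1 - u ^ a₁) := by
  have ha₁ : 0 < a₁ := lt_of_lt_of_le ha₂ ha
  set t₁ := u ^ a₁ with ht₁
  set t₂ := u ^ a₂ with ht₂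
  have ht₁0 : 0 < t₁ := Real.rpow_pos_of_pos hu0 a₁
  have ht₂0 : 0 < t₂ := Real.rpow_pos_of_pos hu0 a₂
  have ht₁1 : t₁ < 1 := Real.rpow_lt_one hu0.le hu1 ha₁
  have ht₂1 : t₂ < 1 := Real.rpow_lt_one hu0.le hu1 ha₂
  have hle : t₁ ≤ t₂ := Real.rpow_le_rpow_of_exponent_ge hu0 hu1.le ha
  have hdiv : t₁ / (1 - t₁) ≤ t₂ / (1 - t₂) := by
    rw [div_le_div_iff₀ (by linarith) (by linarith)]
    nlinarith
  have hlog : Real.log u ≤ 0 := Real.log_nonpos hu0.le hu1.le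
  have e1 : t₂ * Real.log u / (1 - t₂) = Real.log u * (t₂ / (1 - t₂)) := by ring
  have e2 : t₁ * Real.log u / (1 - t₁) = Real.log u * (t₁ / (1 - t₁)) := by ring
  rw [e1, e2]
  exact mul_le_mul_of_nonpos_left hdiv hlog

theorem eta_combined_monotonicity (x φ θ₁ θ₂ α₁ α₂ : ℝ) (hx : 0 < x) (hφ : 0 < φ)
    (hθ₁ : 0 < θ₁) (hθ : θ₁ ≤ θ₂) (hα₂ : 0 < α₂) (hα : α₂ ≤ α₁) :
    let η : ℝ → ℝ → ℝ := fun a u => u ^ a * Real.log u / (1 - u ^ a)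
    let u : ℝ → ℝ := fun t => 1 - Real.exp (-t * x ^ (-φ))
    η α₂ (u θ₂) ≤ η α₁ (u θ₁) := by
  intro η u
  have hxφ : 0 < x ^ (-φ) := Real.rpow_pos_of_pos hx _
  have hu : ∀ t : ℝ, 0 < t → 0 < u t ∧ u t < 1 := by
    intro t ht
    constructor
    · have : Real.exp (-t * x ^ (-φ)) < 1 := by
        rw [Real.exp_lt_one_iff]
        nlinarith
      simp only [u]; linarith
    · have : 0 < Real.exp (-t * x ^ (-φ)) := Real.exp_pos _
      simp only [u]; linarith
  obtain ⟨h10, h11⟩ := hu θ₁ hθ₁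
  obtain ⟨h20, h21⟩ := hu θ₂ (lt_of_lt_of_le hθ₁ hθ)
  have hule : u θ₁ ≤ u θ₂ := by
    have : Real.exp (-θ₂ * x ^ (-φ)) ≤ Real.exp (-θ₁ * x ^ (-φ)) := by
      apply Real.exp_le_exp.2
      nlinarith
    simp only [u]; linarith
  calc η α₂ (u θ₂) ≤ η α₂ (u θ₁) := eta_u_anti hα₂ h10 hule h21
    _ ≤ η α₁ (u θ₁) := eta_a_mono h10 h11 hα₂ hα
end

section
/- Let γ(α, u) = α(1-u)u^(α-1)/(1-u^α) for α > 0 and u ∈ (0,1), and let u(θ) = 1-e^(-θx^(-φ)) for fixed x, φ > 0. If α₁ ≥ α₂ ≥ 1 and 0 < θ₁ ≤ θ₂, then γ(α₂, u(θ₂)) ≥ γ(α₁, u(θ₁)). -/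
open Real

/-- Generic helper: if `f` has derivative `f'` everywhere and `f'` is nonnegative
to the right of `a`, then `f a ≤ f b` for `a ≤ b`. -/
lemma mono_from_deriv {f f' : ℝ → ℝ} (a b : ℝ)
    (hd : ∀ r, HasDerivAt f (f' r) r)
    (h' : ∀ r, a < r → 0 ≤ f' r) (hab : a ≤ b) : f a ≤ f b := by
  have hm : MonotoneOn f (Set.Ici a) := by
    apply monotoneOn_of_deriv_nonneg (convex_Ici a)
      (fun r _ => (hd r).continuousAt.continuousWithinAt)
      (fun r _ => (hd r).differentiableAt.differentiableWithinAt)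
    intro r hr
    rw [(hd r).deriv]
    exact h' r (by simpa [interior_Ici] using hr)
  exact hm Set.self_mem_Ici hab hab

lemma exp_fact (t : ℝ) : 0 ≤ Real.exp t * (t - 1) + 1 := by
  have h : 1 - t ≤ Real.exp (-t) := by linarith [Real.add_one_le_exp (-t)]
  have h2 := mul_le_mul_of_nonneg_left h (Real.exp_pos t).le
  rw [← Real.exp_add] at h2
  simp only [add_neg_cancel, Real.exp_zero] at h2
  nlinarith

/-- `(e^s - 1)/s` is monotone: cross-multiplied form. -/
lemma expm1_div_mono {s t : ℝ} (hs : 0 < s) (hst : s ≤ t) :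
    (Real.exp s - 1) * t ≤ (Real.exp t - 1) * s := by
  have hd : ∀ r, HasDerivAt (fun r => (Real.exp r - 1) * s - (Real.exp s - 1) * r)
      (Real.exp r * s - (Real.exp s - 1)) r := by
    intro r
    have h0 := (((Real.hasDerivAt_exp r).sub_const 1).mul_const s).sub
      ((hasDerivAt_id r).const_mul (Real.exp s - 1))
    simp only [mul_one] at h0
    exact h0
  have h := mono_from_deriv s t hd (fun r hr => by
    have h1 : Real.exp s ≤ Real.exp r := Real.exp_le_exp.mpr hr.le
    nlinarith [exp_fact s]) hst
  nlinarith

lemma M_nonneg {a c : ℝ} (ha : 1 ≤ a) (hc : 0 ≤ c) :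
    0 ≤ (a - 1) * Real.exp (a * c) - a * Real.exp ((a - 1) * c) + 1 := by
  have hd : ∀ r, HasDerivAt
      (fun r => (a - 1) * Real.exp (a * r) - a * Real.exp ((a - 1) * r) + 1)
      ((a - 1) * (Real.exp (a * r) * a) - a * (Real.exp ((a - 1) * r) * (a - 1))) r := by
    intro r
    have h1 : HasDerivAt (fun r : ℝ => Real.exp (a * r)) (Real.exp (a * r) * a) r := by
      simpa using ((hasDerivAt_id r).const_mul a).exp
    have h2 : HasDerivAt (fun r : ℝ => Real.exp ((a - 1) * r)) (Real.exp ((a - 1) * r) * (a - 1)) r := by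
      simpa using ((hasDerivAt_id r).const_mul (a - 1)).exp
    exact ((h1.const_mul (a - 1)).sub (h2.const_mul a)).add_const 1
  have h := mono_from_deriv 0 c hd (fun r hr => by
    have h1 : Real.exp ((a - 1) * r) ≤ Real.exp (a * r) :=
      Real.exp_le_exp.mpr (by nlinarith)
    nlinarith [mul_nonneg (mul_nonneg (by linarith : (0:ℝ) ≤ a)
      (by linarith : (0:ℝ) ≤ a - 1)) (by linarith : (0:ℝ) ≤ Real.exp (a*r) - Real.exp ((a-1)*r))]) hc
  simp only [mul_zero, Real.exp_zero] at h
  linarith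

/-- `(e^{ac} - 1)/(e^c - 1)` is monotone in `c` for `a ≥ 1`: cross-multiplied form. -/
lemma cross_mono {a c₂ c₁ : ℝ} (ha : 1 ≤ a) (h2 : 0 < c₂) (h12 : c₂ ≤ c₁) :
    (Real.exp c₁ - 1) * (Real.exp (a * c₂) - 1) ≤ (Real.exp c₂ - 1) * (Real.exp (a * c₁) - 1) := by
  have hd : ∀ r, HasDerivAt
      (fun r => (Real.exp c₂ - 1) * (Real.exp (a * r) - 1) - (Real.exp r - 1) * (Real.exp (a * c₂) - 1))
      ((Real.exp c₂ - 1) * (Real.exp (a * r) * a) - Real.exp r * (Real.exp (a * c₂) - 1)) r := by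
    intro r
    have h1 : HasDerivAt (fun r : ℝ => Real.exp (a * r)) (Real.exp (a * r) * a) r := by
      simpa using ((hasDerivAt_id r).const_mul a).exp
    exact (((h1.sub_const 1).const_mul (Real.exp c₂ - 1)).sub
      (((Real.hasDerivAt_exp r).sub_const 1).mul_const (Real.exp (a * c₂) - 1)))
  have key : ∀ r, c₂ < r →
      0 ≤ (Real.exp c₂ - 1) * (Real.exp (a * r) * a) - Real.exp r * (Real.exp (a * c₂) - 1) := by
    intro r hr
    have hsplit : Real.exp (a * r) = Real.exp ((a - 1) * r) * Real.exp r := by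
      rw [← Real.exp_add]; ring_nf
    have hsplit2 : Real.exp (a * c₂) = Real.exp ((a - 1) * c₂) * Real.exp c₂ := by
      rw [← Real.exp_add]; ring_nf
    set A := Real.exp ((a - 1) * r) with hA
    set B := Real.exp ((a - 1) * c₂) with hB
    set E := Real.exp r with hE
    set F := Real.exp c₂ with hF
    have hAB : B ≤ A := Real.exp_le_exp.mpr (by nlinarith)
    have hF1 : 1 < F := Real.one_lt_exp_iff.mpr h2
    have hE0 : 0 < E := Real.exp_pos r
    have hB0 : 0 < B := Real.exp_pos _
    -- bracket : 0 ≤ a * A * (F - 1) - (B * F - 1)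
    have hL2 : 0 ≤ (a - 1) * (B * F) - a * B + 1 := by
      have := M_nonneg ha h2.le
      rw [hsplit2] at this; linarith
    have hbr : 0 ≤ a * A * (F - 1) - (B * F - 1) := by
      nlinarith [mul_nonneg (mul_nonneg (by linarith : (0:ℝ) ≤ a)
        (by linarith : (0:ℝ) ≤ F - 1)) (by linarith : (0:ℝ) ≤ A - B)]
    rw [hsplit, hsplit2]
    calc (0:ℝ) ≤ E * (a * A * (F - 1) - (B * F - 1)) := by positivity
    _ = (F - 1) * (A * E * a) - E * (B * F - 1) := by ring
  have h := mono_from_deriv c₂ c₁ hd key h12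
  linarith

/-- The key substitution: with `u = e^{-c}`, `γ(a,u) = a(e^c-1)/(e^{ac}-1)`. -/
lemma gamma_eq (a c : ℝ) (ha : 0 < a) (hc : 0 < c) :
    a * (1 - Real.exp (-c)) * Real.exp (-c) ^ (a - 1) / (1 - Real.exp (-c) ^ a)
      = a * (Real.exp c - 1) / (Real.exp (a * c) - 1) := by
  rw [Real.rpow_def_of_pos (Real.exp_pos _), Real.rpow_def_of_pos (Real.exp_pos _),
    Real.log_exp]
  have e1 : Real.exp (-c * (a - 1)) = Real.exp c / Real.exp (a * c) := by
    rw [← Real.exp_sub]; ring_nf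
  have e2 : Real.exp (-c * a) = 1 / Real.exp (a * c) := by
    rw [eq_div_iff (Real.exp_ne_zero _), ← Real.exp_add,
      show -c * a + a * c = 0 by ring, Real.exp_zero]
  have e3 : Real.exp (-c) = 1 / Real.exp c := by
    rw [eq_div_iff (Real.exp_ne_zero _), ← Real.exp_add,
      show -c + c = 0 by ring, Real.exp_zero]
  have hG1 : (1:ℝ) < Real.exp (a * c) := Real.one_lt_exp_iff.mpr (by positivity)
  have hE1 : (1:ℝ) < Real.exp c := Real.one_lt_exp_iff.mpr hc
  rw [e1, e2, e3]
  have hGne : Real.exp (a * c) - 1 ≠ 0 := by linarith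
  have hGne' : 1 - 1 / Real.exp (a * c) ≠ 0 := by
    have : 1 / Real.exp (a * c) < 1 := by
      rw [div_lt_one (by positivity)]; exact hG1
    linarith
  field_simp
  try ring

theorem gamma_combined_monotonicity (x φ θ₁ θ₂ α₁ α₂ : ℝ) (hx : 0 < x) (hφ : 0 < φ)
    (hθ₁ : 0 < θ₁) (hθ : θ₁ ≤ θ₂) (hα₂ : 1 ≤ α₂) (hα : α₂ ≤ α₁) :
    let γ : ℝ → ℝ → ℝ := fun a u => a * (1 - u) * u ^ (a - 1) / (1 - u ^ a)
    let u : ℝ → ℝ := fun t => 1 - Real.exp (-t * x ^ (-φ))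
    γ α₁ (u θ₁) ≤ γ α₂ (u θ₂) := by
  intro γ u
  have hm : 0 < x ^ (-φ) := Real.rpow_pos_of_pos hx _
  have hα₂0 : 0 < α₂ := by linarith
  have hα₁0 : 0 < α₁ := by linarith
  have hu : ∀ θ : ℝ, 0 < θ → 0 < u θ ∧ u θ < 1 := by
    intro θ hθ0
    constructor
    · have : Real.exp (-θ * x ^ (-φ)) < 1 := by
        rw [Real.exp_lt_one_iff]; nlinarith
      simp only [u]; linarith
    · simp only [u]; have := Real.exp_pos (-θ * x ^ (-φ)); linarith
  obtain ⟨hu1, hu1'⟩ := hu θ₁ hθ₁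
  obtain ⟨hu2, hu2'⟩ := hu θ₂ (lt_of_lt_of_le hθ₁ hθ)
  have hule : u θ₁ ≤ u θ₂ := by
    simp only [u]
    have : Real.exp (-θ₂ * x ^ (-φ)) ≤ Real.exp (-θ₁ * x ^ (-φ)) := by
      apply Real.exp_le_exp.mpr; nlinarith
    linarith
  set c₁ := -Real.log (u θ₁) with hc₁def
  set c₂ := -Real.log (u θ₂) with hc₂def
  have hc₁ : 0 < c₁ := by
    have := Real.log_neg hu1 hu1'; linarith
  have hc₂ : 0 < c₂ := by
    have := Real.log_neg hu2 hu2'; linarith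
  have hcc : c₂ ≤ c₁ := by
    have := Real.log_le_log hu1 hule; linarith
  have he1 : u θ₁ = Real.exp (-c₁) := by
    rw [hc₁def, neg_neg, Real.exp_log hu1]
  have he2 : u θ₂ = Real.exp (-c₂) := by
    rw [hc₂def, neg_neg, Real.exp_log hu2]
  have hg1 : γ α₁ (u θ₁) = α₁ * (Real.exp c₁ - 1) / (Real.exp (α₁ * c₁) - 1) := by
    simp only [γ]; rw [he1]; exact gamma_eq α₁ c₁ hα₁0 hc₁
  have hg2 : γ α₂ (u θ₂) = α₂ * (Real.exp c₂ - 1) / (Real.exp (α₂ * c₂) - 1) := by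
    simp only [γ]; rw [he2]; exact gamma_eq α₂ c₂ hα₂0 hc₂
  rw [hg1, hg2]
  have hd1 : (0:ℝ) < Real.exp (α₁ * c₁) - 1 := by
    have : (1:ℝ) < Real.exp (α₁ * c₁) := Real.one_lt_exp_iff.mpr (by positivity)
    linarith
  have hd2 : (0:ℝ) < Real.exp (α₂ * c₂) - 1 := by
    have : (1:ℝ) < Real.exp (α₂ * c₂) := Real.one_lt_exp_iff.mpr (by positivity)
    linarith
  have hd3 : (0:ℝ) < Real.exp (α₂ * c₁) - 1 := by
    have : (1:ℝ) < Real.exp (α₂ * c₁) := Real.one_lt_exp_iff.mpr (by positivity)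
    linarith
  have hEc1 : (0:ℝ) < Real.exp c₁ - 1 := by
    have : (1:ℝ) < Real.exp c₁ := Real.one_lt_exp_iff.mpr hc₁
    linarith
  -- Step 1: decrease α at fixed c₁
  have step1 : α₁ * (Real.exp c₁ - 1) / (Real.exp (α₁ * c₁) - 1)
      ≤ α₂ * (Real.exp c₁ - 1) / (Real.exp (α₂ * c₁) - 1) := by
    rw [div_le_div_iff₀ hd1 hd3]
    have hL1 := expm1_div_mono (s := α₂ * c₁) (t := α₁ * c₁)
      (by positivity) (by nlinarith)
    nlinarith [mul_le_mul_of_nonneg_left hL1 hEc1.le, hc₁]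
  -- Step 2: increase c at fixed α₂
  have step2 : α₂ * (Real.exp c₁ - 1) / (Real.exp (α₂ * c₁) - 1)
      ≤ α₂ * (Real.exp c₂ - 1) / (Real.exp (α₂ * c₂) - 1) := by
    rw [div_le_div_iff₀ hd3 hd2]
    have hL3 := cross_mono (a := α₂) hα₂ hc₂ hcc
    nlinarith [mul_le_mul_of_nonneg_left hL3 hα₂0.le]
  linarith
end
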